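/- arXiv:2006.16887 — 8 statements merged into one kernel-verified Lean document; each statement's English description precedes it below -/
import Mathlib

section
/- Let G₁ and G₂ be graphs on n vertices and f: V(G₁) → V(G₂) a bijection. Let G₁ ⊟_f G₂ be the graph on V(G₁) ∪ V(G₂) whose induced subgraphs on V(G₁) and V(G₂) are G₁ and G₂, and whose cross edges are exactly {v f(v) : v ∈ V(G₁)}. Then the thinness of the complement of G₁ ⊟_f G₂ is at least n/2. -/
open SimpleGraph

/-- An ordering (given by an injective rank function `f`) and a partition (given by a
coloring `c`) are consistent: for `r < s < t`, if `r, s` are in the same class and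
`t` is adjacent to `r`, then `t` is adjacent to `s`. -/
def Consistent {V : Type*} (G : SimpleGraph V) (f : V → ℕ) (c : V → ℕ) : Prop :=
  ∀ r s t : V, f r < f s → f s < f t → c r = c s → G.Adj t r → G.Adj t s

/-- Strong consistency: consistency with the ordering and with its reverse. -/
def StronglyConsistent {V : Type*} (G : SimpleGraph V) (f : V → ℕ) (c : V → ℕ) : Prop :=
  Consistent G f c ∧
    ∀ r s t : V, f r < f s → f s < f t → c s = c t → G.Adj t r → G.Adj s r

/-- The thinness of a graph. -/
noncomputable def thin {V : Type*} (G : SimpleGraph V) : ℕ :=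
  sInf {k | ∃ f c : V → ℕ, Function.Injective f ∧ (∀ v, c v < k) ∧ Consistent G f c}

/-- The proper thinness of a graph. -/
noncomputable def pthin {V : Type*} (G : SimpleGraph V) : ℕ :=
  sInf {k | ∃ f c : V → ℕ, Function.Injective f ∧ (∀ v, c v < k) ∧ StronglyConsistent G f c}

/-- Independent thinness: classes must be independent sets. -/
noncomputable def indthin {V : Type*} (G : SimpleGraph V) : ℕ :=
  sInf {k | ∃ f c : V → ℕ, Function.Injective f ∧ (∀ v, c v < k) ∧ Consistent G f c ∧
    ∀ u v : V, c u = c v → ¬ G.Adj u v}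

/-- Independent proper thinness. -/
noncomputable def indpthin {V : Type*} (G : SimpleGraph V) : ℕ :=
  sInf {k | ∃ f c : V → ℕ, Function.Injective f ∧ (∀ v, c v < k) ∧ StronglyConsistent G f c ∧
    ∀ u v : V, c u = c v → ¬ G.Adj u v}

/-- Complete thinness: classes must be cliques. -/
noncomputable def compthin {V : Type*} (G : SimpleGraph V) : ℕ :=
  sInf {k | ∃ f c : V → ℕ, Function.Injective f ∧ (∀ v, c v < k) ∧ Consistent G f c ∧
    ∀ u v : V, u ≠ v → c u = c v → G.Adj u v}

/-- Complete proper thinness. -/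
noncomputable def comppthin {V : Type*} (G : SimpleGraph V) : ℕ :=
  sInf {k | ∃ f c : V → ℕ, Function.Injective f ∧ (∀ v, c v < k) ∧ StronglyConsistent G f c ∧
    ∀ u v : V, u ≠ v → c u = c v → G.Adj u v}

/-- The incompatibility graph `G_<` of a graph and an ordering: for `v < w`,
`vw` is an edge iff there is `z > w` adjacent to `v` but not to `w`. -/
def incompat {V : Type*} (G : SimpleGraph V) (f : V → ℕ) : SimpleGraph V where
  Adj v w :=
    (f v < f w ∧ ∃ z, f w < f z ∧ G.Adj z v ∧ ¬ G.Adj z w) ∨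
    (f w < f v ∧ ∃ z, f v < f z ∧ G.Adj z w ∧ ¬ G.Adj z v)
  symm := ⟨fun v w h => h.symm⟩
  loopless := ⟨fun v h => by rcases h with ⟨h, _⟩ | ⟨h, _⟩ <;> exact lt_irrefl _ h⟩

/-- The join of two graphs. -/
def joinG {V₁ V₂ : Type*} (G₁ : SimpleGraph V₁) (G₂ : SimpleGraph V₂) :
    SimpleGraph (V₁ ⊕ V₂) where
  Adj x y := match x, y with
    | Sum.inl u, Sum.inl v => G₁.Adj u v
    | Sum.inr u, Sum.inr v => G₂.Adj u v
    | Sum.inl _, Sum.inr _ => True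
    | Sum.inr _, Sum.inl _ => True
  symm := by constructor; rintro (u | u) (v | v) h
             · exact G₁.symm.symm _ _ h
             · trivial
             · trivial
             · exact G₂.symm.symm _ _ h
  loopless := by constructor; rintro (u | u) h
                 · exact G₁.loopless.irrefl u h
                 · exact G₂.loopless.irrefl u h

/-- A graph is complete iff all pairs of distinct vertices are adjacent. -/
def IsCompleteGraph {V : Type*} (G : SimpleGraph V) : Prop :=
  ∀ u v : V, u ≠ v → G.Adj u v

/-- The clique number of a graph. -/
noncomputable def omegaNum {V : Type*} (G : SimpleGraph V) : ℕ :=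
  sSup {n | ∃ s : Finset V, s.card = n ∧ ∀ u ∈ s, ∀ v ∈ s, u ≠ v → G.Adj u v}

/-- The independence number of a graph. -/
noncomputable def alphaNum {V : Type*} (G : SimpleGraph V) : ℕ :=
  sSup {n | ∃ s : Finset V, s.card = n ∧ ∀ u ∈ s, ∀ v ∈ s, u ≠ v → ¬ G.Adj u v}


/-- The graph `G₁ ⊟_e G₂`: disjoint copies of `G₁` and `G₂` with the cross edges
given exactly by the bijection `e`. -/
def boxminus {V₁ V₂ : Type*} (G₁ : SimpleGraph V₁) (G₂ : SimpleGraph V₂) (e : V₁ ≃ V₂) :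
    SimpleGraph (V₁ ⊕ V₂) where
  Adj x y := match x, y with
    | Sum.inl u, Sum.inl v => G₁.Adj u v
    | Sum.inr u, Sum.inr v => G₂.Adj u v
    | Sum.inl u, Sum.inr w => w = e u
    | Sum.inr w, Sum.inl u => w = e u
  symm := by constructor; rintro (u | u) (v | v) h
             · exact G₁.symm.symm _ _ h
             · exact h
             · exact h
             · exact G₂.symm.symm _ _ h
  loopless := by constructor; rintro (u | u) h
                 · exact G₁.loopless.irrefl u h
                 · exact G₂.loopless.irrefl u h

/-- The thinness of the complement of `G₁ ⊟_e G₂` is at least `n/2`,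
where `n` is the number of vertices of `G₁`. -/
theorem thin_compl_boxminus {V₁ V₂ : Type*} [Fintype V₁] [Fintype V₂]
    (G₁ : SimpleGraph V₁) (G₂ : SimpleGraph V₂) (e : V₁ ≃ V₂) :
    Fintype.card V₁ ≤ 2 * thin (boxminus G₁ G₂ e)ᶜ := by
  classical
  set H := (boxminus G₁ G₂ e)ᶜ with hH
  set S := {k | ∃ f c : (V₁ ⊕ V₂) → ℕ, Function.Injective f ∧ (∀ v, c v < k) ∧ Consistent H f c}
    with hS
  have hne : S.Nonempty := by
    obtain ⟨g⟩ : Nonempty ((V₁ ⊕ V₂) ≃ Fin (Fintype.card (V₁ ⊕ V₂))) := ⟨Fintype.equivFin _⟩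
    refine ⟨Fintype.card (V₁ ⊕ V₂), fun v => (g v : ℕ), fun v => (g v : ℕ), ?_, ?_, ?_⟩
    · intro a b h
      exact g.injective (Fin.val_injective h)
    · intro v; exact (g v).is_lt
    · intro r s t h1 h2 hcc _
      exact absurd (g.injective (Fin.val_injective hcc)) (by rintro rfl; exact lt_irrefl _ h1)
  have hmem := Nat.sInf_mem hne
  obtain ⟨f, c, hf, hc, hcons⟩ := hmem
  set k := sInf S with hk
  -- key lemma for V₁
  have key₁ : ∀ u s : V₁, u ≠ s → f (.inl u) < f (.inl s) → c (.inl u) = c (.inl s) →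
      f (.inr (e s)) < f (.inl s) := by
    intro u s hus hlt hcc
    by_contra h
    have hne2 : f (.inl s) ≠ f (.inr (e s)) := fun h' => by simpa using hf h'
    have hlt2 : f (.inl s) < f (.inr (e s)) := lt_of_le_of_ne (not_lt.mp h) hne2
    have hadj : H.Adj (.inr (e s)) (.inl u) := by
      rw [hH, SimpleGraph.compl_adj]
      refine ⟨by simp, ?_⟩
      show ¬ (e s = e u)
      simpa using fun h => hus (e.injective h).symm
    have := hcons (.inl u) (.inl s) (.inr (e s)) hlt hlt2 hcc hadj
    rw [hH, SimpleGraph.compl_adj] at this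
    exact this.2 rfl
  have key₂ : ∀ u s : V₂, u ≠ s → f (.inr u) < f (.inr s) → c (.inr u) = c (.inr s) →
      f (.inl (e.symm s)) < f (.inr s) := by
    intro u s hus hlt hcc
    by_contra h
    have hne2 : f (.inr s) ≠ f (.inl (e.symm s)) := fun h' => by simpa using hf h'
    have hlt2 : f (.inr s) < f (.inl (e.symm s)) := lt_of_le_of_ne (not_lt.mp h) hne2
    have hadj : H.Adj (.inl (e.symm s)) (.inr u) := by
      rw [hH, SimpleGraph.compl_adj]
      refine ⟨by simp, ?_⟩
      show ¬ (u = e (e.symm s))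
      simp only [Equiv.apply_symm_apply]
      exact hus
    have := hcons (.inr u) (.inr s) (.inl (e.symm s)) hlt hlt2 hcc hadj
    rw [hH, SimpleGraph.compl_adj] at this
    exact this.2 (show s = e (e.symm s) from (e.apply_symm_apply s).symm)
  set U₁ : Finset V₁ := Finset.univ.filter (fun v => f (.inl v) < f (.inr (e v))) with hU₁
  set U₂ : Finset V₂ := Finset.univ.filter (fun w => f (.inr w) < f (.inl (e.symm w))) with hU₂
  have hcard₁ : U₁.card ≤ k := by
    have : U₁.card ≤ (Finset.range k).card := by
      apply Finset.card_le_card_of_injOn (fun v => c (.inl v))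
      · intro v _
        simp only [Finset.mem_coe, Finset.mem_range]
        exact hc _
      · intro v hv w hw hcc
        by_contra hvw
        have hne2 : f (.inl v) ≠ f (.inl w) := fun h' => hvw (by simpa using hf h')
        rcases lt_or_gt_of_ne hne2 with h | h
        · have := key₁ v w hvw h hcc
          rw [hU₁] at hw
          simp only [Finset.mem_coe, Finset.mem_filter] at hw
          exact absurd hw.2 (not_lt.mpr this.le)
        · have := key₁ w v (Ne.symm hvw) h hcc.symm
          rw [hU₁] at hv
          simp only [Finset.mem_coe, Finset.mem_filter] at hv
          exact absurd hv.2 (not_lt.mpr this.le)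
    simpa using this
  have hcard₂ : U₂.card ≤ k := by
    have : U₂.card ≤ (Finset.range k).card := by
      apply Finset.card_le_card_of_injOn (fun v => c (.inr v))
      · intro v _
        simp only [Finset.mem_coe, Finset.mem_range]
        exact hc _
      · intro v hv w hw hcc
        by_contra hvw
        have hne2 : f (.inr v) ≠ f (.inr w) := fun h' => hvw (by simpa using hf h')
        rcases lt_or_gt_of_ne hne2 with h | h
        · have := key₂ v w hvw h hcc
          rw [hU₂] at hw
          simp only [Finset.mem_coe, Finset.mem_filter] at hw
          exact absurd hw.2 (not_lt.mpr this.le)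
        · have := key₂ w v (Ne.symm hvw) h hcc.symm
          rw [hU₂] at hv
          simp only [Finset.mem_coe, Finset.mem_filter] at hv
          exact absurd hv.2 (not_lt.mpr this.le)
    simpa using this
  -- U₁ = e⁻¹(U₂ᶜ)
  have hsplit : U₁ = U₂ᶜ.map e.symm.toEmbedding := by
    ext v
    simp only [hU₁, hU₂, Finset.mem_filter, Finset.mem_univ, true_and, Finset.mem_map,
      Finset.mem_compl, Equiv.toEmbedding_apply]
    constructor
    · intro h
      refine ⟨e v, ?_, by simp⟩
      simp only [Finset.mem_filter, Finset.mem_univ, true_and, not_lt, Equiv.symm_apply_apply]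
      exact h.le
    · rintro ⟨w, hw, rfl⟩
      simp only [Finset.mem_filter, Finset.mem_univ, true_and, not_lt,
        Equiv.apply_symm_apply] at hw ⊢
      have hne2 : f (.inl (e.symm w)) ≠ f (.inr w) := fun h' => by simpa using hf h'
      exact lt_of_le_of_ne hw hne2
  have hcardeq : U₁.card + U₂.card = Fintype.card V₁ := by
    rw [hsplit, Finset.card_map, Finset.card_compl]
    have h2 : U₂.card ≤ Fintype.card V₂ := Finset.card_le_univ _
    have : Fintype.card V₂ = Fintype.card V₁ := Fintype.card_congr e.symm
    omega
  calc Fintype.card V₁ = U₁.card + U₂.card := hcardeq.symm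
    _ ≤ k + k := Nat.add_le_add hcard₁ hcard₂
    _ = 2 * k := (two_mul k).symm
    _ = 2 * thin H := rfl
end

section
/- For every n ≥ 1, the thinness of the crown graph CR_n is at least n/2. -/
open SimpleGraph

/-- The crown graph `CR n`: `K_{n,n}` minus a perfect matching. -/
def crownGraph (n : ℕ) : SimpleGraph (Fin n ⊕ Fin n) where
  Adj x y := match x, y with
    | Sum.inl i, Sum.inr j => i ≠ j
    | Sum.inr i, Sum.inl j => i ≠ j
    | _, _ => False
  symm := by constructor; rintro (i | i) (j | j) h
             · exact h
             · exact fun hh => h hh.symm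
             · exact fun hh => h hh.symm
             · exact h
  loopless := by constructor; rintro (i | i) h <;> exact h

/-- For every `n ≥ 1`, the thinness of the crown graph `CR n` is at least `n/2`. -/
theorem thin_crownGraph (n : ℕ) (hn : 1 ≤ n) : n ≤ 2 * thin (crownGraph n) := by
  have hS : {k | ∃ f c : (Fin n ⊕ Fin n) → ℕ, Function.Injective f ∧ (∀ v, c v < k) ∧
      Consistent (crownGraph n) f c}.Nonempty := by
    refine ⟨n + n, fun v => (finSumFinEquiv v : ℕ), fun v => (finSumFinEquiv v : ℕ),
      ?_, fun v => (finSumFinEquiv v).isLt, ?_⟩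
    · intro u v h
      exact finSumFinEquiv.injective (Fin.val_injective h)
    · intro r s t hrs _ hcrs _
      exact absurd hcrs (ne_of_lt hrs)
  have hmem : thin (crownGraph n) ∈ {k | ∃ f c : (Fin n ⊕ Fin n) → ℕ, Function.Injective f ∧
      (∀ v, c v < k) ∧ Consistent (crownGraph n) f c} := Nat.sInf_mem hS
  obtain ⟨f, c, hf, hc, hcons⟩ := hmem
  set k := thin (crownGraph n) with hk
  -- key facts
  have keyL : ∀ i j : Fin n, i ≠ j → f (Sum.inl i) < f (Sum.inl j) →
      f (Sum.inl j) < f (Sum.inr j) → c (Sum.inl i) ≠ c (Sum.inl j) := by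
    intro i j hij h1 h2 hc'
    have hadj : (crownGraph n).Adj (Sum.inr j) (Sum.inl i) := by
      show j ≠ i
      exact hij.symm
    have := hcons (Sum.inl i) (Sum.inl j) (Sum.inr j) h1 h2 hc' hadj
    exact (show j ≠ j from this) rfl
  have keyR : ∀ i j : Fin n, i ≠ j → f (Sum.inr i) < f (Sum.inr j) →
      f (Sum.inr j) < f (Sum.inl j) → c (Sum.inr i) ≠ c (Sum.inr j) := by
    intro i j hij h1 h2 hc'
    have hadj : (crownGraph n).Adj (Sum.inl j) (Sum.inr i) := by
      show j ≠ i
      exact hij.symm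
    have := hcons (Sum.inr i) (Sum.inr j) (Sum.inl j) h1 h2 hc' hadj
    exact (show j ≠ j from this) rfl
  -- the injective map
  let g : Fin n → Fin n ⊕ Fin n := fun i =>
    if f (Sum.inl i) < f (Sum.inr i) then Sum.inl i else Sum.inr i
  let H : Fin n → Fin k × Bool := fun i =>
    (⟨c (g i), hc _⟩, decide (f (Sum.inl i) < f (Sum.inr i)))
  have Hinj : Function.Injective H := by
    intro i j hHij
    by_contra hij
    have hb : decide (f (Sum.inl i) < f (Sum.inr i))
        = decide (f (Sum.inl j) < f (Sum.inr j)) := congrArg Prod.snd hHij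
    have hcc : c (g i) = c (g j) := congrArg (fun p => (p.1 : Fin k).val) hHij
    by_cases hi : f (Sum.inl i) < f (Sum.inr i)
    · have hj : f (Sum.inl j) < f (Sum.inr j) := by
        by_contra hj
        simp [hi, hj] at hb
      have hgi : g i = Sum.inl i := if_pos hi
      have hgj : g j = Sum.inl j := if_pos hj
      rw [hgi, hgj] at hcc
      have hne : f (Sum.inl i) ≠ f (Sum.inl j) := fun h =>
        hij (Sum.inl_injective (hf h))
      rcases hne.lt_or_gt with h | h
      · exact keyL i j hij h hj hcc
      · exact keyL j i (Ne.symm hij) h hi hcc.symm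
    · have hj : ¬ f (Sum.inl j) < f (Sum.inr j) := by
        by_contra hj
        simp [hi, hj] at hb
      have hi' : f (Sum.inr i) < f (Sum.inl i) := by
        rcases lt_or_eq_of_le (not_lt.mp hi) with h | h
        · exact h
        · exact absurd (hf h) (by simp)
      have hj' : f (Sum.inr j) < f (Sum.inl j) := by
        rcases lt_or_eq_of_le (not_lt.mp hj) with h | h
        · exact h
        · exact absurd (hf h) (by simp)
      have hgi : g i = Sum.inr i := if_neg hi
      have hgj : g j = Sum.inr j := if_neg hj
      rw [hgi, hgj] at hcc
      have hne : f (Sum.inr i) ≠ f (Sum.inr j) := fun h =>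
        hij (Sum.inr_injective (hf h))
      rcases hne.lt_or_gt with h | h
      · exact keyR i j hij h hj' hcc
      · exact keyR j i (Ne.symm hij) h hi' hcc.symm
  have := Fintype.card_le_of_injective H Hinj
  simpa [Fintype.card_prod, mul_comm, two_mul] using this
end

section
/- For any graph G and any subset S of its vertices, thin(G) ≤ |V(G)| − |S| + thin(G[S]). -/
open SimpleGraph

/-- For any graph `G` and any subset `S` of its vertices,
`thin G ≤ |V(G)| - |S| + thin (G[S])`. -/
theorem thin_le_card_sub_add {V : Type*} [Fintype V] (G : SimpleGraph V) (S : Finset V) :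
    thin G ≤ Fintype.card V - S.card + thin (G.induce (S : Set V)) := by
  classical
  set GS := G.induce (S : Set V) with hGS
  -- the defining set for thin GS is nonempty
  haveI : Fintype ↥(S : Set V) := FinsetCoe.fintype S
  have hne : {k | ∃ f c : ↥(S : Set V) → ℕ, Function.Injective f ∧ (∀ v, c v < k) ∧
      Consistent GS f c}.Nonempty := by
    refine ⟨Fintype.card ↥(S : Set V), fun v => (Fintype.equivFin _ v : ℕ),
      fun v => (Fintype.equivFin _ v : ℕ), ?_, ?_, ?_⟩
    · intro a b hab
      exact (Fintype.equivFin _).injective (Fin.ext hab)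
    · intro v; exact (Fintype.equivFin _ v).isLt
    · intro r s t hrs _ hcs _
      exact absurd (congrArg (fun x => x) hcs) (by simp only [ne_eq]; omega)
  have hmem : thin GS ∈ {k | ∃ f c : ↥(S : Set V) → ℕ, Function.Injective f ∧
      (∀ v, c v < k) ∧ Consistent GS f c} := Nat.sInf_mem hne
  obtain ⟨f₀, c₀, hf₀, hc₀, hcons₀⟩ := hmem
  set k₀ := thin GS with hk₀
  set T : Finset V := Sᶜ with hT
  have hmemT : ∀ {v : V}, v ∉ S → v ∈ T := fun h => Finset.mem_compl.mpr h
  set f : V → ℕ := fun v =>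
    if h : v ∈ S then T.card + f₀ ⟨v, h⟩ else (T.equivFin ⟨v, hmemT h⟩ : ℕ) with hf
  set c : V → ℕ := fun v =>
    if h : v ∈ S then c₀ ⟨v, h⟩ else k₀ + (T.equivFin ⟨v, hmemT h⟩ : ℕ) with hc
  have hcard : Fintype.card V - S.card = T.card := (Finset.card_compl S).symm
  rw [hcard]
  have hfS : ∀ (v : V) (h : v ∈ S), f v = T.card + f₀ ⟨v, h⟩ := by
    intro v h; simp [hf, h]
  have hfN : ∀ (v : V) (h : v ∉ S), f v = (T.equivFin ⟨v, hmemT h⟩ : ℕ) := by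
    intro v h; simp [hf, h]
  have hcS : ∀ (v : V) (h : v ∈ S), c v = c₀ ⟨v, h⟩ := by
    intro v h; simp [hc, h]
  have hcN : ∀ (v : V) (h : v ∉ S), c v = k₀ + (T.equivFin ⟨v, hmemT h⟩ : ℕ) := by
    intro v h; simp [hc, h]
  have hfNlt : ∀ (v : V) (h : v ∉ S), f v < T.card := by
    intro v h; rw [hfN v h]; exact (T.equivFin ⟨v, hmemT h⟩).isLt
  apply Nat.sInf_le
  refine ⟨f, c, ?_, ?_, ?_⟩
  · -- injectivity
    intro a b hab
    by_cases ha : a ∈ S <;> by_cases hb : b ∈ S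
    · rw [hfS a ha, hfS b hb] at hab
      have h2 : f₀ ⟨a, ha⟩ = f₀ ⟨b, hb⟩ := by omega
      exact congrArg Subtype.val (hf₀ h2)
    · rw [hfS a ha, hfN b hb] at hab
      exact absurd hab (by have := (T.equivFin ⟨b, hmemT hb⟩).isLt; omega)
    · rw [hfN a ha, hfS b hb] at hab
      exact absurd hab (by have := (T.equivFin ⟨a, hmemT ha⟩).isLt; omega)
    · rw [hfN a ha, hfN b hb] at hab
      have := T.equivFin.injective (Fin.ext hab)
      exact congrArg Subtype.val this
  · -- color bound
    intro v
    by_cases h : v ∈ S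
    · rw [hcS v h]; have := hc₀ ⟨v, h⟩; omega
    · rw [hcN v h]; have := (T.equivFin ⟨v, hmemT h⟩).isLt; omega
  · -- consistency
    intro r s t hrs hst hcrs hadj
    by_cases hr : r ∈ S <;> by_cases hs : s ∈ S
    · -- both in S
      have ht : t ∈ S := by
        by_contra ht
        have h1 := hfNlt t ht
        rw [hfS s hs] at hst; omega
      rw [hfS r hr, hfS s hs] at hrs
      rw [hfS s hs, hfS t ht] at hst
      rw [hcS r hr, hcS s hs] at hcrs
      have hadj' : GS.Adj ⟨t, ht⟩ ⟨r, hr⟩ := hadj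
      exact hcons₀ ⟨r, hr⟩ ⟨s, hs⟩ ⟨t, ht⟩ (by omega) (by omega) hcrs hadj'
    · rw [hcS r hr, hcN s hs] at hcrs
      have := hc₀ ⟨r, hr⟩; omega
    · rw [hcN r hr, hcS s hs] at hcrs
      have := hc₀ ⟨s, hs⟩; omega
    · rw [hcN r hr, hcN s hs] at hcrs
      have heq : r = s := by
        have := T.equivFin.injective (Fin.ext (by omega :
          ((T.equivFin ⟨r, hmemT hr⟩ : ℕ)) = (T.equivFin ⟨s, hmemT hs⟩ : ℕ)))
        exact congrArg Subtype.val this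
      subst heq
      exact absurd hrs (lt_irrefl _)
end

section
/- For any two graphs G₁ and G₂, thin(G₁ ∪ G₂) = max{thin(G₁), thin(G₂)}, where ∪ denotes the disjoint union. -/
open SimpleGraph

/-- Auxiliary: the thinness set is nonempty for a finite graph. -/
lemma thinSet_nonempty {V : Type*} [Fintype V] (G : SimpleGraph V) :
    {k | ∃ f c : V → ℕ, Function.Injective f ∧ (∀ v, c v < k) ∧ Consistent G f c}.Nonempty := by
  classical
  refine ⟨Fintype.card V, fun v => (Fintype.equivFin V v : ℕ), fun v => (Fintype.equivFin V v : ℕ),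
    ?_, fun v => (Fintype.equivFin V v).isLt, ?_⟩
  · intro a b h
    exact (Fintype.equivFin V).injective (Fin.ext h)
  · intro r s t hrs _ hcs _
    have : r = s := (Fintype.equivFin V).injective (Fin.ext hcs)
    subst this
    exact absurd hrs (lt_irrefl _)

lemma mem_thinSet_left {V₁ V₂ : Type*} (G₁ : SimpleGraph V₁) (G₂ : SimpleGraph V₂) {k : ℕ}
    (h : k ∈ {k | ∃ f c : V₁ ⊕ V₂ → ℕ, Function.Injective f ∧ (∀ v, c v < k) ∧
      Consistent (G₁ ⊕g G₂) f c}) :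
    k ∈ {k | ∃ f c : V₁ → ℕ, Function.Injective f ∧ (∀ v, c v < k) ∧ Consistent G₁ f c} := by
  obtain ⟨f, c, hf, hc, hcons⟩ := h
  refine ⟨fun v => f (Sum.inl v), fun v => c (Sum.inl v), fun a b h => ?_,
    fun v => hc _, fun r s t h1 h2 h3 h4 => ?_⟩
  · exact Sum.inl_injective (hf h)
  · have := hcons (Sum.inl r) (Sum.inl s) (Sum.inl t) h1 h2 h3 (by simpa using h4)
    simpa using this

lemma mem_thinSet_right {V₁ V₂ : Type*} (G₁ : SimpleGraph V₁) (G₂ : SimpleGraph V₂) {k : ℕ}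
    (h : k ∈ {k | ∃ f c : V₁ ⊕ V₂ → ℕ, Function.Injective f ∧ (∀ v, c v < k) ∧
      Consistent (G₁ ⊕g G₂) f c}) :
    k ∈ {k | ∃ f c : V₂ → ℕ, Function.Injective f ∧ (∀ v, c v < k) ∧ Consistent G₂ f c} := by
  obtain ⟨f, c, hf, hc, hcons⟩ := h
  refine ⟨fun v => f (Sum.inr v), fun v => c (Sum.inr v), fun a b h => ?_,
    fun v => hc _, fun r s t h1 h2 h3 h4 => ?_⟩
  · exact Sum.inr_injective (hf h)
  · have := hcons (Sum.inr r) (Sum.inr s) (Sum.inr t) h1 h2 h3 (by simpa using h4)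
    simpa using this

/-- The thinness of a disjoint union is the maximum of the thinnesses. -/
theorem thin_sum {V₁ V₂ : Type*} [Fintype V₁] [Fintype V₂]
    (G₁ : SimpleGraph V₁) (G₂ : SimpleGraph V₂) :
    thin (G₁ ⊕g G₂) = max (thin G₁) (thin G₂) := by
  classical
  apply le_antisymm
  · -- thin (G₁ ⊕g G₂) ≤ max
    obtain ⟨f₁, c₁, hf₁, hc₁, hcons₁⟩ := Nat.sInf_mem (thinSet_nonempty G₁)
    obtain ⟨f₂, c₂, hf₂, hc₂, hcons₂⟩ := Nat.sInf_mem (thinSet_nonempty G₂)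
    set N : ℕ := (Finset.univ.sup f₁) + 1 with hN
    have hNlt : ∀ u : V₁, f₁ u < N := fun u =>
      Nat.lt_succ_of_le (Finset.le_sup (Finset.mem_univ u))
    apply Nat.sInf_le
    refine ⟨Sum.elim f₁ (fun v => N + f₂ v), Sum.elim c₁ c₂, ?_, ?_, ?_⟩
    · rintro (a | a) (b | b) h <;> simp only [Sum.elim_inl, Sum.elim_inr] at h
      · exact congrArg Sum.inl (hf₁ h)
      · exact absurd h (Nat.ne_of_lt (lt_of_lt_of_le (hNlt a) (Nat.le_add_right N _)))
      · exact absurd h.symm (Nat.ne_of_lt (lt_of_lt_of_le (hNlt b) (Nat.le_add_right N _)))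
      · exact congrArg Sum.inr (hf₂ (Nat.add_left_cancel h))
    · rintro (v | v)
      · exact lt_of_lt_of_le (hc₁ v) (le_max_left _ _)
      · exact lt_of_lt_of_le (hc₂ v) (le_max_right _ _)
    · rintro (r | r) (s | s) (t | t) h1 h2 h3 h4 <;>
        simp only [Sum.elim_inl, Sum.elim_inr, SimpleGraph.sum_adj] at h1 h2 h3 h4 ⊢ <;>
        first
        | exact hcons₁ r s t h1 h2 h3 h4
        | exact absurd h2 (not_lt.2 ((hNlt t).le.trans (Nat.le_add_right N _)))
        | exact absurd ((Nat.le_add_right N _).trans_lt h1) (not_lt.2 (hNlt s).le)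
        | exact hcons₂ r s t (Nat.lt_of_add_lt_add_left h1) (Nat.lt_of_add_lt_add_left h2) h3 h4
  · -- max ≤ thin (G₁ ⊕g G₂)
    have hne := thinSet_nonempty (G₁ ⊕g G₂)
    have hmem := Nat.sInf_mem hne
    apply max_le
    · exact Nat.sInf_le (mem_thinSet_left G₁ G₂ hmem)
    · exact Nat.sInf_le (mem_thinSet_right G₁ G₂ hmem)
end

section
/- Let G=(V,E) be a non-complete graph with thin(G)=k and let v₁ < ⋯ < vₙ be any ordering of V. Then there exists a clique v_{i₁} < ⋯ < v_{i_k} of size k in the incompatibility graph G_<, together with a vertex v_j > v_{i₁} such that v_j v_{i₁} ∉ E. -/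
open SimpleGraph

section Dilworth

variable {α : Type*} (r : α → α → Prop)

lemma exists_maximal' (hre : ∀ x, r x x) (htr : ∀ {x y z}, r x y → r y z → r x z)
    (has : ∀ {x y}, r x y → r y x → x = y)
    (s : Finset α) (hs : s.Nonempty) : ∃ t ∈ s, ∀ x ∈ s, r t x → x = t := by
  classical
  obtain ⟨t, ht, hmax⟩ := s.exists_max_image (fun x => (s.filter (fun y => r y x)).card) hs
  refine ⟨t, ht, fun x hx hrtx => ?_⟩
  by_contra hne
  have hss : s.filter (fun y => r y t) ⊂ s.filter (fun y => r y x) := by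
    refine ⟨fun y hy => ?_, fun hsub => ?_⟩
    · simp only [Finset.mem_filter] at hy ⊢
      exact ⟨hy.1, htr hy.2 hrtx⟩
    · have hxmem : x ∈ s.filter (fun y => r y x) := by
        simp only [Finset.mem_filter]; exact ⟨hx, hre x⟩
      have := hsub hxmem
      simp only [Finset.mem_filter] at this
      exact hne (has this.2 hrtx)
  have h1 := Finset.card_lt_card hss
  have h2 := hmax x hx
  omega

lemma exists_minimal' (hre : ∀ x, r x x) (htr : ∀ {x y z}, r x y → r y z → r x z)
    (has : ∀ {x y}, r x y → r y x → x = y)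
    (s : Finset α) (hs : s.Nonempty) : ∃ t ∈ s, ∀ x ∈ s, r x t → x = t :=
  exists_maximal' (fun a b => r b a) hre (fun h1 h2 => htr h2 h1) (fun h1 h2 => has h2 h1) s hs

lemma dilworth' (hre : ∀ x, r x x) (htr : ∀ {x y z}, r x y → r y z → r x z)
    (has : ∀ {x y}, r x y → r y x → x = y) (s : Finset α) :
    ∀ d : ℕ, (∀ t ⊆ s, (∀ x ∈ t, ∀ y ∈ t, x ≠ y → ¬ r x y ∧ ¬ r y x) → t.card ≤ d) →
    ∃ F : Finset (Finset α), F.card ≤ d ∧ (∀ C ∈ F, C ⊆ s) ∧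
      (∀ C ∈ F, ∀ x ∈ C, ∀ y ∈ C, r x y ∨ r y x) ∧ ∀ x ∈ s, ∃ C ∈ F, x ∈ C := by
  classical
  induction s using Finset.strongInduction with
  | _ s ih =>
  intro d hw
  rcases s.eq_empty_or_nonempty with rfl | hs
  · exact ⟨∅, by simp⟩
  -- a maximal element t and a minimal element b with r b t
  obtain ⟨t, ht, htmax⟩ := exists_maximal' r hre htr has s hs
  obtain ⟨b, hb, hbmin0⟩ := exists_minimal' r hre htr has (s.filter (fun x => r x t))
    ⟨t, by simp only [Finset.mem_filter]; exact ⟨ht, hre t⟩⟩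
  simp only [Finset.mem_filter] at hb
  have hbmin : ∀ x ∈ s, r x b → x = b := fun x hx hxb =>
    hbmin0 x (by simp only [Finset.mem_filter]; exact ⟨hx, htr hxb hb.2⟩) hxb
  set C : Finset α := insert b {t} with hC
  have hCs : C ⊆ s := by
    intro x hx
    simp only [hC, Finset.mem_insert, Finset.mem_singleton] at hx
    rcases hx with rfl | rfl
    · exact hb.1
    · exact ht
  have hCchain : ∀ x ∈ C, ∀ y ∈ C, r x y ∨ r y x := by
    intro x hx y hy
    simp only [hC, Finset.mem_insert, Finset.mem_singleton] at hx hy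
    rcases hx with rfl | rfl <;> rcases hy with rfl | rfl
    · exact Or.inl (hre _)
    · exact Or.inl hb.2
    · exact Or.inr hb.2
    · exact Or.inl (hre _)
  have hbC : b ∈ C := by simp [hC]
  have htC : t ∈ C := by simp [hC]
  have hsdiff : s \ C ⊂ s := Finset.sdiff_ssubset hCs ⟨b, hbC⟩
  by_cases hA : ∀ t' ⊆ s \ C, (∀ x ∈ t', ∀ y ∈ t', x ≠ y → ¬ r x y ∧ ¬ r y x) → t'.card ≤ d - 1
  · obtain ⟨F0, hF0card, hF0sub, hF0chain, hF0cov⟩ := ih (s \ C) hsdiff (d - 1) hA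
    have hd1 : 1 ≤ d := by
      have := hw {b} (by intro x hx; simp only [Finset.mem_singleton] at hx; subst hx; exact hb.1)
        (by intro x hx y hy hxy; simp only [Finset.mem_singleton] at hx hy; subst hx; subst hy;
            exact absurd rfl hxy)
      simpa using this
    refine ⟨insert C F0, ?_, ?_, ?_, ?_⟩
    · calc (insert C F0).card ≤ F0.card + 1 := Finset.card_insert_le _ _
        _ ≤ (d - 1) + 1 := by omega
        _ = d := by omega
    · intro C' hC'
      rcases Finset.mem_insert.mp hC' with rfl | hC'
      · exact hCs
      · exact (hF0sub C' hC').trans (Finset.sdiff_subset)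
    · intro C' hC'
      rcases Finset.mem_insert.mp hC' with rfl | hC'
      · exact hCchain
      · exact hF0chain C' hC'
    · intro x hx
      by_cases hxC : x ∈ C
      · exact ⟨C, Finset.mem_insert_self _ _, hxC⟩
      · obtain ⟨C', hC', hxC'⟩ := hF0cov x (Finset.mem_sdiff.mpr ⟨hx, hxC⟩)
        exact ⟨C', Finset.mem_insert_of_mem hC', hxC'⟩
  · push_neg at hA
    obtain ⟨A, hAsub, hAanti, hAcard⟩ := hA
    have hAcard' : A.card ≤ d := hw A (hAsub.trans Finset.sdiff_subset) hAanti
    have hAd : A.card = d := by omega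
    -- every element of s is comparable to some element of A
    have hcomp : ∀ x ∈ s, (∃ a ∈ A, r x a) ∨ (∃ a ∈ A, r a x) := by
      intro x hx
      by_contra hcon
      push_neg at hcon
      obtain ⟨h1, h2⟩ := hcon
      have hxA : x ∉ A := fun hxA => (h1 x hxA) (hre x)
      have : (insert x A).card ≤ d := by
        refine hw _ ?_ ?_
        · intro y hy
          rcases Finset.mem_insert.mp hy with rfl | hy
          · exact hx
          · exact (hAsub.trans Finset.sdiff_subset) hy
        · intro u hu v hv huv
          rcases Finset.mem_insert.mp hu with hu' | hu' <;>
            rcases Finset.mem_insert.mp hv with hv' | hv'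
          · exact absurd (hu'.trans hv'.symm) huv
          · subst hu'; exact ⟨h1 v hv', h2 v hv'⟩
          · subst hv'; exact ⟨h2 u hu', h1 u hu'⟩
          · exact hAanti u hu' v hv' huv
      rw [Finset.card_insert_of_notMem hxA] at this
      omega
    set Dlow : Finset α := s.filter (fun x => ∃ a ∈ A, r x a) with hDlow
    set Dhigh : Finset α := s.filter (fun x => ∃ a ∈ A, r a x) with hDhigh
    have hAlow : A ⊆ Dlow := by
      intro a ha
      simp only [hDlow, Finset.mem_filter]
      exact ⟨(hAsub.trans Finset.sdiff_subset) ha, a, ha, hre a⟩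
    have hAhigh : A ⊆ Dhigh := by
      intro a ha
      simp only [hDhigh, Finset.mem_filter]
      exact ⟨(hAsub.trans Finset.sdiff_subset) ha, a, ha, hre a⟩
    -- key claims
    have hlowkey : ∀ x ∈ Dlow, ∀ a ∈ A, r a x → x = a := by
      intro x hx a ha hax
      simp only [hDlow, Finset.mem_filter] at hx
      obtain ⟨-, a', ha', hxa'⟩ := hx
      have haa' : r a a' := htr hax hxa'
      have : a = a' := by
        by_contra hne
        exact (hAanti a ha a' ha' hne).1 haa'
      subst this
      exact has hxa' hax
    have hhighkey : ∀ x ∈ Dhigh, ∀ a ∈ A, r x a → x = a := by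
      intro x hx a ha hxa
      simp only [hDhigh, Finset.mem_filter] at hx
      obtain ⟨-, a', ha', hxa'⟩ := hx
      have haa' : r a' a := htr hxa' hxa
      have : a' = a := by
        by_contra hne
        exact (hAanti a' ha' a ha hne).1 haa'
      subst this
      exact has hxa hxa'
    have hlowss : Dlow ⊂ s := by
      refine ⟨Finset.filter_subset _ _, fun hsub => ?_⟩
      have := hsub ht
      simp only [hDlow, Finset.mem_filter] at this
      obtain ⟨-, a, ha, hta⟩ := this
      have : a = t := htmax a ((hAsub.trans Finset.sdiff_subset) ha) hta
      subst this
      exact (Finset.mem_sdiff.mp (hAsub ha)).2 htC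
    have hhighss : Dhigh ⊂ s := by
      refine ⟨Finset.filter_subset _ _, fun hsub => ?_⟩
      have := hsub hb.1
      simp only [hDhigh, Finset.mem_filter] at this
      obtain ⟨-, a, ha, hab⟩ := this
      have : a = b := hbmin a ((hAsub.trans Finset.sdiff_subset) ha) hab
      subst this
      exact (Finset.mem_sdiff.mp (hAsub ha)).2 hbC
    have hwlow : ∀ t' ⊆ Dlow, (∀ x ∈ t', ∀ y ∈ t', x ≠ y → ¬ r x y ∧ ¬ r y x) → t'.card ≤ d :=
      fun t' h1 h2 => hw t' (h1.trans (Finset.filter_subset _ _)) h2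
    have hwhigh : ∀ t' ⊆ Dhigh, (∀ x ∈ t', ∀ y ∈ t', x ≠ y → ¬ r x y ∧ ¬ r y x) → t'.card ≤ d :=
      fun t' h1 h2 => hw t' (h1.trans (Finset.filter_subset _ _)) h2
    obtain ⟨Fl, hFlcard, hFlsub, hFlchain, hFlcov⟩ := ih Dlow hlowss d hwlow
    obtain ⟨Fh, hFhcard, hFhsub, hFhchain, hFhcov⟩ := ih Dhigh hhighss d hwhigh
    -- chains containing each a ∈ A
    choose K hKmem hKa using fun (a : α) (ha : a ∈ A) => hFlcov a (hAlow ha)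
    choose L hLmem hLa using fun (a : α) (ha : a ∈ A) => hFhcov a (hAhigh ha)
    -- injectivity and surjectivity onto Fl, Fh
    have hKinj : ∀ a (ha : a ∈ A), ∀ a' (ha' : a' ∈ A), K a ha = K a' ha' → a = a' := by
      intro a ha a' ha' hKK
      by_contra hne
      have h1 := hKa a ha
      have h2 := hKa a' ha'
      rw [hKK] at h1
      rcases hFlchain _ (hKmem a' ha') a h1 a' h2 with h | h
      · exact (hAanti a ha a' ha' hne).1 h
      · exact (hAanti a ha a' ha' hne).2 h
    have hKsurj : ∀ C' ∈ Fl, ∃ a, ∃ ha : a ∈ A, K a ha = C' := by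
      intro C' hC'
      by_contra hcon
      push_neg at hcon
      have himg : (A.attach.image (fun a => K a.1 a.2)) ⊆ Fl.erase C' := by
        intro D hD
        simp only [Finset.mem_image, Finset.mem_attach, true_and] at hD
        obtain ⟨⟨a, ha⟩, rfl⟩ := hD
        exact Finset.mem_erase.mpr ⟨hcon a ha, hKmem a ha⟩
      have hcard1 : A.card ≤ (Fl.erase C').card := by
        have : (A.attach.image (fun a => K a.1 a.2)).card = A.card := by
          rw [Finset.card_image_of_injective _ ?_, Finset.card_attach]
          intro x y hxy
          exact Subtype.ext (hKinj x.1 x.2 y.1 y.2 hxy)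
        calc A.card = _ := this.symm
          _ ≤ (Fl.erase C').card := Finset.card_le_card himg
      have : (Fl.erase C').card < Fl.card := Finset.card_erase_lt_of_mem hC'
      omega
    have hLinj : ∀ a (ha : a ∈ A), ∀ a' (ha' : a' ∈ A), L a ha = L a' ha' → a = a' := by
      intro a ha a' ha' hLL
      by_contra hne
      have h1 := hLa a ha
      have h2 := hLa a' ha'
      rw [hLL] at h1
      rcases hFhchain _ (hLmem a' ha') a h1 a' h2 with h | h
      · exact (hAanti a ha a' ha' hne).1 h
      · exact (hAanti a ha a' ha' hne).2 h
    have hLsurj : ∀ C' ∈ Fh, ∃ a, ∃ ha : a ∈ A, L a ha = C' := by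
      intro C' hC'
      by_contra hcon
      push_neg at hcon
      have himg : (A.attach.image (fun a => L a.1 a.2)) ⊆ Fh.erase C' := by
        intro D hD
        simp only [Finset.mem_image, Finset.mem_attach, true_and] at hD
        obtain ⟨⟨a, ha⟩, rfl⟩ := hD
        exact Finset.mem_erase.mpr ⟨hcon a ha, hLmem a ha⟩
      have hcard1 : A.card ≤ (Fh.erase C').card := by
        have : (A.attach.image (fun a => L a.1 a.2)).card = A.card := by
          rw [Finset.card_image_of_injective _ ?_, Finset.card_attach]
          intro x y hxy
          exact Subtype.ext (hLinj x.1 x.2 y.1 y.2 hxy)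
        calc A.card = _ := this.symm
          _ ≤ (Fh.erase C').card := Finset.card_le_card himg
      have : (Fh.erase C').card < Fh.card := Finset.card_erase_lt_of_mem hC'
      omega
    -- elements of K a are ≤ a, elements of L a are ≥ a
    have hKle : ∀ a (ha : a ∈ A), ∀ x ∈ K a ha, r x a := by
      intro a ha x hx
      rcases hFlchain _ (hKmem a ha) x hx a (hKa a ha) with h | h
      · exact h
      · have := hlowkey x (hFlsub _ (hKmem a ha) hx) a ha h
        subst this; exact hre x
    have hLge : ∀ a (ha : a ∈ A), ∀ y ∈ L a ha, r a y := by
      intro a ha y hy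
      rcases hFhchain _ (hLmem a ha) y hy a (hLa a ha) with h | h
      · have := hhighkey y (hFhsub _ (hLmem a ha) hy) a ha h
        subst this; exact hre y
      · exact h
    refine ⟨A.attach.image (fun a => K a.1 a.2 ∪ L a.1 a.2), ?_, ?_, ?_, ?_⟩
    · calc _ ≤ A.attach.card := Finset.card_image_le
        _ = d := by rw [Finset.card_attach]; exact hAd
    · intro C' hC'
      simp only [Finset.mem_image, Finset.mem_attach, true_and] at hC'
      obtain ⟨⟨a, ha⟩, rfl⟩ := hC'
      intro x hx
      rcases Finset.mem_union.mp hx with hx | hx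
      · exact (Finset.filter_subset _ _) (hFlsub _ (hKmem a ha) hx)
      · exact (Finset.filter_subset _ _) (hFhsub _ (hLmem a ha) hx)
    · intro C' hC'
      simp only [Finset.mem_image, Finset.mem_attach, true_and] at hC'
      obtain ⟨⟨a, ha⟩, rfl⟩ := hC'
      intro x hx y hy
      rcases Finset.mem_union.mp hx with hx | hx <;> rcases Finset.mem_union.mp hy with hy | hy
      · exact hFlchain _ (hKmem a ha) x hx y hy
      · exact Or.inl (htr (hKle a ha x hx) (hLge a ha y hy))
      · exact Or.inr (htr (hKle a ha y hy) (hLge a ha x hx))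
      · exact hFhchain _ (hLmem a ha) x hx y hy
    · intro x hx
      rcases hcomp x hx with hlow | hhigh
      · have hxD : x ∈ Dlow := by simp only [hDlow, Finset.mem_filter]; exact ⟨hx, hlow⟩
        obtain ⟨C', hC', hxC'⟩ := hFlcov x hxD
        obtain ⟨a, ha, rfl⟩ := hKsurj C' hC'
        exact ⟨K a ha ∪ L a ha, Finset.mem_image.mpr ⟨⟨a, ha⟩, Finset.mem_attach _ _, rfl⟩,
          Finset.mem_union_left _ hxC'⟩
      · have hxD : x ∈ Dhigh := by simp only [hDhigh, Finset.mem_filter]; exact ⟨hx, hhigh⟩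
        obtain ⟨C', hC', hxC'⟩ := hFhcov x hxD
        obtain ⟨a, ha, rfl⟩ := hLsurj C' hC'
        exact ⟨K a ha ∪ L a ha, Finset.mem_image.mpr ⟨⟨a, ha⟩, Finset.mem_attach _ _, rfl⟩,
          Finset.mem_union_right _ hxC'⟩

end Dilworth

lemma incompat_adj {V : Type*} (G : SimpleGraph V) (f : V → ℕ) (v w : V) :
    (incompat G f).Adj v w ↔
    (f v < f w ∧ ∃ z, f w < f z ∧ G.Adj z v ∧ ¬ G.Adj z w) ∨
    (f w < f v ∧ ∃ z, f v < f z ∧ G.Adj z w ∧ ¬ G.Adj z v) := Iff.rfl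

/-- If `G` is not complete and `thin G = k`, then for every ordering there is a clique of
size `k` in `G_<` whose smallest vertex has a non-neighbor of `G` above it. -/
theorem exists_clique_incompat {V : Type*} [Fintype V] (G : SimpleGraph V) (k : ℕ)
    (hnc : ¬ IsCompleteGraph G) (hk : thin G = k)
    (f : V → ℕ) (hf : Function.Injective f) :
    ∃ s : Finset V, s.card = k ∧
      (∀ u ∈ s, ∀ v ∈ s, u ≠ v → (incompat G f).Adj u v) ∧
      ∃ x ∈ s, (∀ y ∈ s, f x ≤ f y) ∧ ∃ j : V, f x < f j ∧ ¬ G.Adj j x := by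
  classical
  unfold IsCompleteGraph at hnc
  push_neg at hnc
  obtain ⟨u0, v0, hne0, hnadj0⟩ := hnc
  set S : Set ℕ := {m | ∃ f c : V → ℕ, Function.Injective f ∧ (∀ v, c v < m) ∧ Consistent G f c}
    with hSdef
  have hthin : thin G = sInf S := rfl
  have hSne : S.Nonempty := by
    refine ⟨Fintype.card V, fun v => ((Fintype.equivFin V) v : ℕ),
      fun v => ((Fintype.equivFin V) v : ℕ), ?_, fun v => ((Fintype.equivFin V) v).isLt, ?_⟩
    · intro a b hab
      exact (Fintype.equivFin V).injective (Fin.ext hab)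
    · intro r s t h1 h2 hc hadj
      exact absurd hc (Nat.ne_of_lt h1)
  have hkS : k ∈ S := by rw [← hk, hthin]; exact Nat.sInf_mem hSne
  obtain ⟨f₀, c₀, -, hb₀, -⟩ := hkS
  have hk1 : 1 ≤ k := lt_of_le_of_lt (Nat.zero_le _) (hb₀ u0)
  have hpair : ∃ a j : V, f a < f j ∧ ¬ G.Adj j a := by
    rcases lt_or_gt_of_ne (fun h => hne0 (hf h)) with h | h
    · exact ⟨u0, v0, h, fun hadj => hnadj0 hadj.symm⟩
    · exact ⟨v0, u0, h, hnadj0⟩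
  obtain ⟨a0, j0, hj0lt, hj0⟩ := hpair
  by_cases hkone : k = 1
  · subst hkone
    refine ⟨{a0}, Finset.card_singleton _, ?_, a0, Finset.mem_singleton_self _, ?_, j0, hj0lt, hj0⟩
    · intro u hu v hv huv
      rw [Finset.mem_singleton] at hu hv
      exact absurd (hu.trans hv.symm) huv
    · intro y hy
      rw [Finset.mem_singleton] at hy
      subst hy; exact le_refl _
  have hk2 : 2 ≤ k := by omega
  set A : Finset V := Finset.univ.filter (fun v => ∃ z, f v < f z ∧ ¬ G.Adj z v) with hAdef
  set N : ℕ := (Finset.univ.sup f) + 1 with hNdef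
  have hfN : ∀ v, f v < N := fun v => Nat.lt_succ_of_le (Finset.le_sup (Finset.mem_univ v))
  set f' : V → ℕ := fun v => if v ∈ A then f v else f v + N with hf'def
  have hf'A : ∀ v ∈ A, f' v = f v := fun v hv => by simp [hf'def, hv]
  have hf'B : ∀ v, v ∉ A → f' v = f v + N := fun v hv => by simp [hf'def, hv]
  have hf'inj : Function.Injective f' := by
    intro a b hab
    by_cases haA : a ∈ A <;> by_cases hbA : b ∈ A
    · rw [hf'A a haA, hf'A b hbA] at hab; exact hf hab
    · rw [hf'A a haA, hf'B b hbA] at hab; have := hfN a; omega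
    · rw [hf'B a haA, hf'A b hbA] at hab; have := hfN b; omega
    · rw [hf'B a haA, hf'B b hbA] at hab; exact hf (by omega)
  have hAmem : ∀ v, v ∉ A → ∀ z, f v < f z → G.Adj z v := by
    intro v hv z h1
    by_contra h2
    exact hv (Finset.mem_filter.mpr ⟨Finset.mem_univ _, z, h1, h2⟩)
  have haux : ∀ u w : V, (f' u < f' w ∧ ∃ z, f' w < f' z ∧ G.Adj z u ∧ ¬ G.Adj z w) →
      (f u < f w ∧ ∃ z, f w < f z ∧ G.Adj z u ∧ ¬ G.Adj z w) ∧ u ∈ A ∧ w ∈ A := by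
    rintro u w ⟨hlt, z, hz, hzu, hzw⟩
    have hwA : w ∈ A := by
      by_contra hwB
      rw [hf'B w hwB] at hz
      by_cases hzA : z ∈ A
      · rw [hf'A z hzA] at hz; have := hfN z; omega
      · rw [hf'B z hzA] at hz
        exact hzw (hAmem w hwB z (by omega))
    rw [hf'A w hwA] at hlt hz
    have huA : u ∈ A := by
      by_contra huB
      rw [hf'B u huB] at hlt
      have := hfN w; omega
    rw [hf'A u huA] at hlt
    have hne_zw : z ≠ w := by
      intro h
      subst h
      rw [hf'A z hwA] at hz
      omega
    have hzw_lt : f w < f z := by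
      by_cases hzA : z ∈ A
      · rw [hf'A z hzA] at hz; exact hz
      · rcases lt_trichotomy (f z) (f w) with h | h | h
        · exact absurd ((hAmem z hzA w h).symm) hzw
        · exact absurd (hf h) hne_zw
        · exact h
    exact ⟨⟨hlt, z, hzw_lt, hzu, hzw⟩, huA, hwA⟩
  have hstep : ∀ u w : V, (incompat G f').Adj u w → (incompat G f).Adj u w ∧ u ∈ A ∧ w ∈ A := by
    intro u w h
    rw [incompat_adj] at h
    rcases h with h | h
    · obtain ⟨h1, h2, h3⟩ := haux u w h
      exact ⟨Or.inl h1, h2, h3⟩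
    · obtain ⟨h1, h2, h3⟩ := haux w u h
      exact ⟨Or.inr h1, h3, h2⟩
  -- the compatibility partial order for f'
  set r' : V → V → Prop :=
    fun v w => v = w ∨ (f' v < f' w ∧ ∀ z, f' w < f' z → G.Adj z v → G.Adj z w) with hr'def
  have hre' : ∀ x, r' x x := fun x => Or.inl rfl
  have htr' : ∀ {x y z : V}, r' x y → r' y z → r' x z := by
    intro x y z hxy hyz
    rcases hxy with rfl | ⟨h1, h2⟩
    · exact hyz
    rcases hyz with rfl | ⟨h3, h4⟩
    · exact Or.inr ⟨h1, h2⟩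
    · exact Or.inr ⟨h1.trans h3, fun t ht hadj => h4 t ht (h2 t (h3.trans ht) hadj)⟩
  have has' : ∀ {x y : V}, r' x y → r' y x → x = y := by
    intro x y hxy hyx
    rcases hxy with rfl | ⟨h1, -⟩
    · rfl
    rcases hyx with rfl | ⟨h2, -⟩
    · rfl
    · omega
  have hclq : ∃ s : Finset V, s.card = k ∧ ∀ u ∈ s, ∀ v ∈ s, u ≠ v → (incompat G f').Adj u v := by
    by_contra hno
    have hW : ∀ t ⊆ (Finset.univ : Finset V),
        (∀ x ∈ t, ∀ y ∈ t, x ≠ y → ¬ r' x y ∧ ¬ r' y x) → t.card ≤ k - 1 := by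
      intro t _ hanti
      by_contra hc
      push_neg at hc
      obtain ⟨t', ht'sub, ht'card⟩ := Finset.exists_subset_card_eq (s := t) (n := k) (by omega)
      apply hno
      refine ⟨t', ht'card, ?_⟩
      intro u hu v hv huv
      have h1 := hanti u (ht'sub hu) v (ht'sub hv) huv
      rw [incompat_adj]
      rcases lt_trichotomy (f' u) (f' v) with h | h | h
      · left
        refine ⟨h, ?_⟩
        by_contra hcon
        push_neg at hcon
        exact h1.1 (Or.inr ⟨h, fun z hz hadj => hcon z hz hadj⟩)
      · exact absurd (hf'inj h) huv
      · right
        refine ⟨h, ?_⟩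
        by_contra hcon
        push_neg at hcon
        exact h1.2 (Or.inr ⟨h, fun z hz hadj => hcon z hz hadj⟩)
    obtain ⟨F, hFcard, hFsub, hFchain, hFcov⟩ :=
      dilworth' r' hre' htr' has' Finset.univ (k - 1) hW
    set l := F.toList with hldef
    set c : V → ℕ := fun v => l.findIdx (fun C => decide (v ∈ C)) with hcdef
    have hcov : ∀ v : V, ∃ C ∈ l, (fun C => decide (v ∈ C)) C = true := by
      intro v
      obtain ⟨C, hC, hv⟩ := hFcov v (Finset.mem_univ v)
      exact ⟨C, Finset.mem_toList.mpr hC, by simpa using hv⟩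
    have hclen : ∀ v, c v < l.length := fun v =>
      List.findIdx_lt_length_of_exists (hcov v)
    have hclt : ∀ v, c v < k - 1 := by
      intro v
      have h := hclen v
      have h2 : l.length = F.card := Finset.length_toList F
      omega
    have hcmem : ∀ v : V, v ∈ l[c v]'(hclen v) := by
      intro v
      have := List.findIdx_getElem (p := fun C => decide (v ∈ C)) (xs := l) (w := hclen v)
      simpa using this
    have hcons : Consistent G f' c := by
      intro x y t h1 h2 hcxy hadj
      have hxl : x ∈ l[c x]'(hclen x) := hcmem x
      have hyl : y ∈ l[c x]'(hclen x) := by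
        have h := hcmem y
        simp only [hcxy]
        exact h
      have hCF : l[c x]'(hclen x) ∈ F := by
        rw [← Finset.mem_toList]
        exact List.getElem_mem _
      rcases hFchain _ hCF x hxl y hyl with hr | hr
      · rcases hr with rfl | ⟨-, hcompat⟩
        · exact hadj
        · exact hcompat t h2 hadj
      · rcases hr with rfl | ⟨hlt', -⟩
        · exact hadj
        · omega
    have hmemS : (k - 1) ∈ S := ⟨f', c, hf'inj, hclt, hcons⟩
    have hle : thin G ≤ k - 1 := by rw [hthin]; exact Nat.sInf_le hmemS
    omega
  obtain ⟨s, hscard, hsclq⟩ := hclq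
  have hsne : s.Nonempty := Finset.card_pos.mp (by omega)
  obtain ⟨x, hxs, hxmin⟩ := s.exists_min_image f hsne
  obtain ⟨y, hys, hyx⟩ := Finset.exists_mem_ne (s := s) (by omega) x
  have hxA : x ∈ A := (hstep x y (hsclq x hxs y hys (fun h => hyx h.symm))).2.1
  refine ⟨s, hscard, ?_, x, hxs, hxmin, ?_⟩
  · intro u hu v hv huv
    exact (hstep u v (hsclq u hu v hv huv)).1
  · exact (Finset.mem_filter.mp hxA).2
end

section
/- For any two graphs G₁, G₂, the independent thinness of the join satisfies indthin(G₁ ∨ G₂) = indthin(G₁) + indthin(G₂), and likewise for the independent proper thinness. -/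
open SimpleGraph

section AuxIndthin

open Function

private lemma filter_card_lt_aux {S : Finset ℕ} {x y : ℕ} (hx : x ∈ S) (hxy : x < y) :
    (S.filter (· < x)).card < (S.filter (· < y)).card := by
  apply Finset.card_lt_card
  constructor
  · intro z hz
    rw [Finset.mem_filter] at hz ⊢
    exact ⟨hz.1, hz.2.trans hxy⟩
  · intro hsub
    have hx' : x ∈ S.filter (· < y) := Finset.mem_filter.mpr ⟨hx, hxy⟩
    have := hsub hx'
    rw [Finset.mem_filter] at this
    omega

private lemma compress_exists {W : Type*} [Fintype W] (g : W → ℕ) :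
    ∃ g' : W → ℕ, (∀ v, g' v < (Finset.image g Finset.univ).card) ∧
      ∀ u v, g' u = g' v ↔ g u = g v := by
  classical
  refine ⟨fun w => ((Finset.image g Finset.univ).filter (· < g w)).card, fun v => ?_,
    fun u v => ?_⟩
  · apply Finset.card_lt_card
    refine ⟨Finset.filter_subset _ _, fun hsub => ?_⟩
    have h1 : g v ∈ Finset.image g Finset.univ := Finset.mem_image_of_mem g (Finset.mem_univ v)
    have := hsub h1
    rw [Finset.mem_filter] at this
    omega
  · dsimp only
    constructor
    · intro h
      by_contra hne
      rcases lt_or_gt_of_ne hne with hlt | hlt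
      · have := filter_card_lt_aux (Finset.mem_image_of_mem g (Finset.mem_univ u)) hlt
        omega
      · have := filter_card_lt_aux (Finset.mem_image_of_mem g (Finset.mem_univ v)) hlt
        omega
    · intro h; rw [h]

private lemma strong_wit_card {V : Type*} [Fintype V] (G : SimpleGraph V) :
    ∃ f c : V → ℕ, Function.Injective f ∧ (∀ v, c v < Fintype.card V) ∧
      StronglyConsistent G f c ∧ ∀ u v : V, c u = c v → ¬ G.Adj u v := by
  classical
  refine ⟨fun v => (Fintype.equivFin V v : ℕ), fun v => (Fintype.equivFin V v : ℕ),
    ?_, ?_, ⟨?_, ?_⟩, ?_⟩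
  · intro a b h
    exact (Fintype.equivFin V).injective (Fin.val_injective h)
  · intro v; exact (Fintype.equivFin V v).isLt
  · intro r s t h1 h2 hc _
    have : r = s := (Fintype.equivFin V).injective (Fin.val_injective hc)
    subst this; exact absurd h1 (lt_irrefl _)
  · intro r s t h1 h2 hc _
    have : s = t := (Fintype.equivFin V).injective (Fin.val_injective hc)
    subst this; exact absurd h2 (lt_irrefl _)
  · intro u v hc
    have : u = v := (Fintype.equivFin V).injective (Fin.val_injective hc)
    subst this; exact G.loopless.irrefl u

private def jF {V₁ V₂ : Type*} (f₁ : V₁ → ℕ) (f₂ : V₂ → ℕ) : V₁ ⊕ V₂ → ℕ :=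
  Sum.elim (fun v => 2 * f₁ v) (fun v => 2 * f₂ v + 1)

private def jC {V₁ V₂ : Type*} (k₁ : ℕ) (c₁ : V₁ → ℕ) (c₂ : V₂ → ℕ) : V₁ ⊕ V₂ → ℕ :=
  Sum.elim c₁ (fun v => k₁ + c₂ v)

section JoinWit

variable {V₁ V₂ : Type*} {G₁ : SimpleGraph V₁} {G₂ : SimpleGraph V₂}
  {f₁ c₁ : V₁ → ℕ} {f₂ c₂ : V₂ → ℕ} {k₁ k₂ : ℕ}

private lemma jF_inj (h₁ : Injective f₁) (h₂ : Injective f₂) : Injective (jF f₁ f₂) := by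
  rintro (a | a) (b | b) h <;> simp only [jF, Sum.elim_inl, Sum.elim_inr] at h
  · exact congrArg Sum.inl (h₁ (by omega))
  · exact absurd h (by omega)
  · exact absurd h (by omega)
  · exact congrArg Sum.inr (h₂ (by omega))

private lemma jC_lt (hc₁ : ∀ v, c₁ v < k₁) (hc₂ : ∀ v, c₂ v < k₂) :
    ∀ v, jC k₁ c₁ c₂ v < k₁ + k₂ := by
  rintro (v | v) <;> simp only [jC, Sum.elim_inl, Sum.elim_inr]
  · have := hc₁ v; omega
  · have := hc₂ v; omega

private lemma jCons (hc₁ : ∀ v, c₁ v < k₁) (h₁ : Consistent G₁ f₁ c₁)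
    (h₂ : Consistent G₂ f₂ c₂) :
    Consistent (joinG G₁ G₂) (jF f₁ f₂) (jC k₁ c₁ c₂) := by
  rintro (r | r) (s | s) (t | t) hrs hst hc hadj <;>
    simp only [jF, jC, Sum.elim_inl, Sum.elim_inr] at hrs hst hc
  · exact h₁ r s t (by omega) (by omega) hc hadj
  · trivial
  · exact absurd hc (by have := hc₁ r; omega)
  · exact absurd hc (by have := hc₁ r; omega)
  · exact absurd hc (by have := hc₁ s; omega)
  · exact absurd hc (by have := hc₁ s; omega)
  · trivial
  · exact h₂ r s t (by omega) (by omega) (by omega) hadj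

private lemma jRev (hc₁ : ∀ v, c₁ v < k₁)
    (h₁ : ∀ r s t : V₁, f₁ r < f₁ s → f₁ s < f₁ t → c₁ s = c₁ t → G₁.Adj t r → G₁.Adj s r)
    (h₂ : ∀ r s t : V₂, f₂ r < f₂ s → f₂ s < f₂ t → c₂ s = c₂ t → G₂.Adj t r → G₂.Adj s r) :
    ∀ r s t : V₁ ⊕ V₂, jF f₁ f₂ r < jF f₁ f₂ s → jF f₁ f₂ s < jF f₁ f₂ t →
      jC k₁ c₁ c₂ s = jC k₁ c₁ c₂ t → (joinG G₁ G₂).Adj t r → (joinG G₁ G₂).Adj s r := by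
  rintro (r | r) (s | s) (t | t) hrs hst hc hadj <;>
    simp only [jF, jC, Sum.elim_inl, Sum.elim_inr] at hrs hst hc
  · exact h₁ r s t (by omega) (by omega) hc hadj
  · exact absurd hc (by have := hc₁ s; omega)
  · exact absurd hc (by have := hc₁ t; omega)
  · trivial
  · trivial
  · exact absurd hc (by have := hc₁ s; omega)
  · exact absurd hc (by have := hc₁ t; omega)
  · exact h₂ r s t (by omega) (by omega) (by omega) hadj

private lemma jInd (hc₁ : ∀ v, c₁ v < k₁)
    (h₁ : ∀ u v : V₁, c₁ u = c₁ v → ¬ G₁.Adj u v)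
    (h₂ : ∀ u v : V₂, c₂ u = c₂ v → ¬ G₂.Adj u v) :
    ∀ u v : V₁ ⊕ V₂, jC k₁ c₁ c₂ u = jC k₁ c₁ c₂ v → ¬ (joinG G₁ G₂).Adj u v := by
  rintro (u | u) (v | v) hc hadj <;>
    simp only [jC, Sum.elim_inl, Sum.elim_inr] at hc
  · exact h₁ u v hc hadj
  · exact absurd hc (by have := hc₁ u; omega)
  · exact absurd hc (by have := hc₁ v; omega)
  · exact h₂ u v (by omega) hadj

end JoinWit

section Restrict

variable {V W : Type*} {G : SimpleGraph V} {H : SimpleGraph W} {ι : W → V}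
  {f c : V → ℕ} {c' : W → ℕ}

private lemma restrict_cons (hadj : ∀ u v, G.Adj (ι u) (ι v) ↔ H.Adj u v)
    (hrefl : ∀ u v, c' u = c' v → c (ι u) = c (ι v))
    (h : Consistent G f c) : Consistent H (f ∘ ι) c' := by
  intro r s t h1 h2 hc ha
  exact (hadj t s).mp (h (ι r) (ι s) (ι t) h1 h2 (hrefl r s hc) ((hadj t r).mpr ha))

private lemma restrict_rev (hadj : ∀ u v, G.Adj (ι u) (ι v) ↔ H.Adj u v)
    (hrefl : ∀ u v, c' u = c' v → c (ι u) = c (ι v))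
    (h : ∀ r s t : V, f r < f s → f s < f t → c s = c t → G.Adj t r → G.Adj s r) :
    ∀ r s t : W, (f ∘ ι) r < (f ∘ ι) s → (f ∘ ι) s < (f ∘ ι) t → c' s = c' t →
      H.Adj t r → H.Adj s r := by
  intro r s t h1 h2 hc ha
  exact (hadj s r).mp (h (ι r) (ι s) (ι t) h1 h2 (hrefl s t hc) ((hadj t r).mpr ha))

private lemma restrict_ind (hadj : ∀ u v, G.Adj (ι u) (ι v) ↔ H.Adj u v)
    (hrefl : ∀ u v, c' u = c' v → c (ι u) = c (ι v))
    (h : ∀ u v : V, c u = c v → ¬ G.Adj u v) :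
    ∀ u v : W, c' u = c' v → ¬ H.Adj u v := by
  intro u v hc ha
  exact h (ι u) (ι v) (hrefl u v hc) ((hadj u v).mpr ha)

end Restrict

private lemma lower_core {V₁ V₂ : Type*} [Fintype V₁] [Fintype V₂]
    {G₁ : SimpleGraph V₁} {G₂ : SimpleGraph V₂}
    {k : ℕ} {c : V₁ ⊕ V₂ → ℕ} (hc : ∀ v, c v < k)
    (hind : ∀ u v, c u = c v → ¬ (joinG G₁ G₂).Adj u v) :
    ∃ k₁ k₂ : ℕ, k₁ + k₂ ≤ k ∧
      (∃ c₁' : V₁ → ℕ, (∀ v, c₁' v < k₁) ∧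
        ∀ u v, c₁' u = c₁' v ↔ c (Sum.inl u) = c (Sum.inl v)) ∧
      (∃ c₂' : V₂ → ℕ, (∀ v, c₂' v < k₂) ∧
        ∀ u v, c₂' u = c₂' v ↔ c (Sum.inr u) = c (Sum.inr v)) := by
  classical
  set S₁ : Finset ℕ := Finset.image (fun w => c (Sum.inl w)) Finset.univ with hS₁
  set S₂ : Finset ℕ := Finset.image (fun w => c (Sum.inr w)) Finset.univ with hS₂
  refine ⟨S₁.card, S₂.card, ?_, compress_exists _, compress_exists _⟩
  have hdisj : Disjoint S₁ S₂ := by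
    rw [Finset.disjoint_left]
    intro a ha hb
    rw [hS₁, Finset.mem_image] at ha
    rw [hS₂, Finset.mem_image] at hb
    obtain ⟨u, -, hu⟩ := ha
    obtain ⟨v, -, hv⟩ := hb
    exact hind (Sum.inl u) (Sum.inr v) (hu.trans hv.symm) trivial
  have hsub : S₁ ∪ S₂ ⊆ Finset.range k := by
    intro a ha
    rcases Finset.mem_union.mp ha with ha | ha
    · rw [hS₁, Finset.mem_image] at ha
      obtain ⟨u, -, hu⟩ := ha
      exact Finset.mem_range.mpr (hu ▸ hc _)
    · rw [hS₂, Finset.mem_image] at ha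
      obtain ⟨u, -, hu⟩ := ha
      exact Finset.mem_range.mpr (hu ▸ hc _)
  calc S₁.card + S₂.card = (S₁ ∪ S₂).card := (Finset.card_union_of_disjoint hdisj).symm
    _ ≤ (Finset.range k).card := Finset.card_le_card hsub
    _ = k := Finset.card_range k

end AuxIndthin

private lemma indthin_mem {V : Type*} [Fintype V] (G : SimpleGraph V) :
    ∃ f c : V → ℕ, Function.Injective f ∧ (∀ v, c v < indthin G) ∧ Consistent G f c ∧
      ∀ u v : V, c u = c v → ¬ G.Adj u v := by
  have h : {k | ∃ f c : V → ℕ, Function.Injective f ∧ (∀ v, c v < k) ∧ Consistent G f c ∧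
      ∀ u v : V, c u = c v → ¬ G.Adj u v}.Nonempty := ⟨Fintype.card V, by
    obtain ⟨f, c, hf, hc, hsc, hi⟩ := strong_wit_card G
    exact ⟨f, c, hf, hc, hsc.1, hi⟩⟩
  exact Nat.sInf_mem h

private lemma indpthin_mem {V : Type*} [Fintype V] (G : SimpleGraph V) :
    ∃ f c : V → ℕ, Function.Injective f ∧ (∀ v, c v < indpthin G) ∧ StronglyConsistent G f c ∧
      ∀ u v : V, c u = c v → ¬ G.Adj u v := by
  have h : {k | ∃ f c : V → ℕ, Function.Injective f ∧ (∀ v, c v < k) ∧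
      StronglyConsistent G f c ∧
      ∀ u v : V, c u = c v → ¬ G.Adj u v}.Nonempty := ⟨Fintype.card V, strong_wit_card G⟩
  exact Nat.sInf_mem h

private lemma indthin_le {V : Type*} {G : SimpleGraph V} {k : ℕ}
    (h : ∃ f c : V → ℕ, Function.Injective f ∧ (∀ v, c v < k) ∧ Consistent G f c ∧
      ∀ u v : V, c u = c v → ¬ G.Adj u v) : indthin G ≤ k :=
  Nat.sInf_le h

private lemma indpthin_le {V : Type*} {G : SimpleGraph V} {k : ℕ}
    (h : ∃ f c : V → ℕ, Function.Injective f ∧ (∀ v, c v < k) ∧ StronglyConsistent G f c ∧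
      ∀ u v : V, c u = c v → ¬ G.Adj u v) : indpthin G ≤ k :=
  Nat.sInf_le h


/-- Independent (proper) thinness of a join is the sum of the independent (proper)
thinnesses. -/
theorem indthin_join {V₁ V₂ : Type*} [Fintype V₁] [Fintype V₂]
    (G₁ : SimpleGraph V₁) (G₂ : SimpleGraph V₂) :
    indthin (joinG G₁ G₂) = indthin G₁ + indthin G₂ ∧
    indpthin (joinG G₁ G₂) = indpthin G₁ + indpthin G₂ := by
  classical
  constructor
  · apply le_antisymm
    · obtain ⟨f₁, c₁, hf₁, hc₁, hcons₁, hind₁⟩ := indthin_mem G₁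
      obtain ⟨f₂, c₂, hf₂, hc₂, hcons₂, hind₂⟩ := indthin_mem G₂
      exact indthin_le ⟨jF f₁ f₂, jC (indthin G₁) c₁ c₂, jF_inj hf₁ hf₂, jC_lt hc₁ hc₂,
        jCons hc₁ hcons₁ hcons₂, jInd hc₁ hind₁ hind₂⟩
    · obtain ⟨f, c, hf, hc, hcons, hind⟩ := indthin_mem (joinG G₁ G₂)
      obtain ⟨k₁, k₂, hk, ⟨c₁', hc₁', hrefl₁⟩, ⟨c₂', hc₂', hrefl₂⟩⟩ := lower_core hc hind
      have h1 : indthin G₁ ≤ k₁ := indthin_le ⟨f ∘ Sum.inl, c₁',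
        hf.comp Sum.inl_injective, hc₁',
        restrict_cons (ι := Sum.inl) (fun _ _ => Iff.rfl)
          (fun u v h => (hrefl₁ u v).mp h) hcons,
        restrict_ind (ι := Sum.inl) (fun _ _ => Iff.rfl)
          (fun u v h => (hrefl₁ u v).mp h) hind⟩
      have h2 : indthin G₂ ≤ k₂ := indthin_le ⟨f ∘ Sum.inr, c₂',
        hf.comp Sum.inr_injective, hc₂',
        restrict_cons (ι := Sum.inr) (fun _ _ => Iff.rfl)
          (fun u v h => (hrefl₂ u v).mp h) hcons,
        restrict_ind (ι := Sum.inr) (fun _ _ => Iff.rfl)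
          (fun u v h => (hrefl₂ u v).mp h) hind⟩
      omega
  · apply le_antisymm
    · obtain ⟨f₁, c₁, hf₁, hc₁, ⟨hcons₁, hrev₁⟩, hind₁⟩ := indpthin_mem G₁
      obtain ⟨f₂, c₂, hf₂, hc₂, ⟨hcons₂, hrev₂⟩, hind₂⟩ := indpthin_mem G₂
      exact indpthin_le ⟨jF f₁ f₂, jC (indpthin G₁) c₁ c₂, jF_inj hf₁ hf₂, jC_lt hc₁ hc₂,
        ⟨jCons hc₁ hcons₁ hcons₂, jRev hc₁ hrev₁ hrev₂⟩, jInd hc₁ hind₁ hind₂⟩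
    · obtain ⟨f, c, hf, hc, ⟨hcons, hrev⟩, hind⟩ := indpthin_mem (joinG G₁ G₂)
      obtain ⟨k₁, k₂, hk, ⟨c₁', hc₁', hrefl₁⟩, ⟨c₂', hc₂', hrefl₂⟩⟩ := lower_core hc hind
      have h1 : indpthin G₁ ≤ k₁ := indpthin_le ⟨f ∘ Sum.inl, c₁',
        hf.comp Sum.inl_injective, hc₁',
        ⟨restrict_cons (ι := Sum.inl) (fun _ _ => Iff.rfl)
          (fun u v h => (hrefl₁ u v).mp h) hcons,
        restrict_rev (ι := Sum.inl) (fun _ _ => Iff.rfl)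
          (fun u v h => (hrefl₁ u v).mp h) hrev⟩,
        restrict_ind (ι := Sum.inl) (fun _ _ => Iff.rfl)
          (fun u v h => (hrefl₁ u v).mp h) hind⟩
      have h2 : indpthin G₂ ≤ k₂ := indpthin_le ⟨f ∘ Sum.inr, c₂',
        hf.comp Sum.inr_injective, hc₂',
        ⟨restrict_cons (ι := Sum.inr) (fun _ _ => Iff.rfl)
          (fun u v h => (hrefl₂ u v).mp h) hcons,
        restrict_rev (ι := Sum.inr) (fun _ _ => Iff.rfl)
          (fun u v h => (hrefl₂ u v).mp h) hrev⟩,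
        restrict_ind (ι := Sum.inr) (fun _ _ => Iff.rfl)
          (fun u v h => (hrefl₂ u v).mp h) hind⟩
      omega
end

section
/- For every graph G, pthin(3G ∨ K₁) = pthin(G) + 1, where 3G is the disjoint union of three copies of G. -/
open SimpleGraph

/-- The disjoint union of `t` copies of `G`. -/
def copiesG {V : Type*} (t : ℕ) (G : SimpleGraph V) : SimpleGraph (Fin t × V) where
  Adj x y := x.1 = y.1 ∧ G.Adj x.2 y.2
  symm := ⟨fun _ _ h => ⟨h.1.symm, h.2.symm⟩⟩
  loopless := ⟨fun _ h => G.loopless.irrefl _ h.2⟩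


section Aux

open Sum

private lemma block_lt {x y a b N : ℕ} (hx : x < 3) (hy : y < 3) (ha : a < N) (hb : b < N) :
    x * N + a < y * N + b ↔ (x < y ∨ (x = y ∧ a < b)) := by
  interval_cases x <;> interval_cases y <;> omega

private lemma block_eq {x y a b N : ℕ} (hx : x < 3) (hy : y < 3) (ha : a < N) (hb : b < N)
    (h : x * N + a = y * N + b) : x = y ∧ a = b := by
  interval_cases x <;> interval_cases y <;> omega

private lemma block_top {x a N : ℕ} (hx : x < 3) (ha : a < N) : x * N + a < 3 * N := by
  interval_cases x <;> omega

private lemma exists_trivial_layout {V : Type*} [Fintype V] (G : SimpleGraph V) :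
    Fintype.card V ∈ {k | ∃ f c : V → ℕ, Function.Injective f ∧ (∀ v, c v < k) ∧
      StronglyConsistent G f c} := by
  refine ⟨fun v => (Fintype.equivFin V v : ℕ), fun v => (Fintype.equivFin V v : ℕ),
    fun a b h => (Fintype.equivFin V).injective (Fin.ext h),
    fun v => (Fintype.equivFin V v).isLt, ?_, ?_⟩
  · intro r s t h1 h2 hc _; omega
  · intro r s t h1 h2 hc _; omega

private lemma pthin_layout {V : Type*} [Fintype V] (G : SimpleGraph V) :
    ∃ f c : V → ℕ, Function.Injective f ∧ (∀ v, c v < pthin G) ∧ StronglyConsistent G f c :=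
  Nat.sInf_mem ⟨_, exists_trivial_layout G⟩

private lemma upper_bound {V : Type*} [Fintype V] (G : SimpleGraph V) :
    pthin (joinG (copiesG 3 G) (⊥ : SimpleGraph Unit)) ≤ pthin G + 1 := by
  obtain ⟨f, c, hf, hck, hc1, hc2⟩ := pthin_layout G
  set N : ℕ := (Finset.univ.sup f) + 1 with hNdef
  have hN : ∀ v, f v < N := fun v =>
    Nat.lt_succ_of_le (Finset.le_sup (Finset.mem_univ v))
  set f' : (Fin 3 × V) ⊕ Unit → ℕ :=
    Sum.elim (fun p => (p.1 : ℕ) * N + f p.2) (fun _ => 3 * N) with hf'def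
  set c' : (Fin 3 × V) ⊕ Unit → ℕ :=
    Sum.elim (fun p => c p.2) (fun _ => pthin G) with hc'def
  have hmem : pthin G + 1 ∈ {k | ∃ f c : (Fin 3 × V) ⊕ Unit → ℕ, Function.Injective f ∧
      (∀ v, c v < k) ∧ StronglyConsistent (joinG (copiesG 3 G) (⊥ : SimpleGraph Unit)) f c} := by
    refine ⟨f', c', ?_, ?_, ?_, ?_⟩
    · rintro (p | u) (q | w) h <;> simp only [hf'def, Sum.elim_inl, Sum.elim_inr] at h
      · obtain ⟨h1, h2⟩ := block_eq p.1.isLt q.1.isLt (hN p.2) (hN q.2) h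
        have : p = q := Prod.ext (Fin.ext h1) (hf h2)
        rw [this]
      · exact absurd h (Nat.ne_of_lt (block_top p.1.isLt (hN p.2)))
      · exact absurd h.symm (Nat.ne_of_lt (block_top q.1.isLt (hN q.2)))
      · rfl
    · rintro (p | u)
      · simp only [hc'def, Sum.elim_inl]; exact Nat.lt_succ_of_lt (hck p.2)
      · simp only [hc'def, Sum.elim_inr]; exact Nat.lt_succ_self _
    · rintro (pr | ur) (ps | us) (pt | ut) h1 h2 hcol hadj <;>
        simp only [hf'def, hc'def, Sum.elim_inl, Sum.elim_inr] at h1 h2 hcol ⊢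
      · -- all inl
        obtain ⟨e, hadjG⟩ : pt.1 = pr.1 ∧ G.Adj pt.2 pr.2 := hadj
        have eN : (pt.1 : ℕ) = pr.1 := congrArg Fin.val e
        rcases (block_lt pr.1.isLt ps.1.isLt (hN _) (hN _)).1 h1 with h | ⟨e1, l1⟩ <;>
          rcases (block_lt ps.1.isLt pt.1.isLt (hN _) (hN _)).1 h2 with h' | ⟨e2, l2⟩
        · omega
        · omega
        · omega
        · exact ⟨Fin.ext (by omega), hc1 pr.2 ps.2 pt.2 l1 l2 hcol hadjG⟩
      · trivial
      ·
        trivial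
      · -- t inr, s inr
        exact absurd h2 (by omega)
      · -- r inr, s inl : f' r = 3N < f' s impossible
        exact absurd h1 (Nat.not_lt.2 (le_of_lt (block_top ps.1.isLt (hN ps.2))))
      · trivial
      · exact absurd h1 (by omega)
      · exact absurd h2 (by omega)
    · rintro (pr | ur) (ps | us) (pt | ut) h1 h2 hcol hadj <;>
        simp only [hf'def, hc'def, Sum.elim_inl, Sum.elim_inr] at h1 h2 hcol ⊢
      · obtain ⟨e, hadjG⟩ : pt.1 = pr.1 ∧ G.Adj pt.2 pr.2 := hadj
        have eN : (pt.1 : ℕ) = pr.1 := congrArg Fin.val e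
        rcases (block_lt pr.1.isLt ps.1.isLt (hN _) (hN _)).1 h1 with h | ⟨e1, l1⟩ <;>
          rcases (block_lt ps.1.isLt pt.1.isLt (hN _) (hN _)).1 h2 with h' | ⟨e2, l2⟩
        · omega
        · omega
        · omega
        · exact ⟨Fin.ext (by omega), hc2 pr.2 ps.2 pt.2 l1 l2 hcol hadjG⟩
      · -- s inl, t inr : hcol : c ps.2 = pthin G, impossible
        exact absurd hcol (Nat.ne_of_lt (hck ps.2))
      · -- s inr, t inl : f' s = 3N < f' t impossible
        exact absurd h2 (Nat.not_lt.2 (le_of_lt (block_top pt.1.isLt (hN pt.2))))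
      · exact absurd h2 (by omega)
      · exact absurd h1 (Nat.not_lt.2 (le_of_lt (block_top ps.1.isLt (hN ps.2))))
      · exact absurd hcol (Nat.ne_of_lt (hck ps.2))
      · exact absurd h1 (by omega)
      · exact absurd h2 (by omega)
  exact Nat.sInf_le hmem

private lemma lower_aux {V : Type*} [Fintype V] (G : SimpleGraph V) {k : ℕ}
    (hk : k ∈ {k | ∃ f c : (Fin 3 × V) ⊕ Unit → ℕ, Function.Injective f ∧
      (∀ v, c v < k) ∧ StronglyConsistent (joinG (copiesG 3 G) (⊥ : SimpleGraph Unit)) f c}) :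
    pthin G + 1 ≤ k := by
  obtain ⟨f, c, hf, hck, hc1, hc2⟩ := hk
  set U : (Fin 3 × V) ⊕ Unit := Sum.inr () with hUdef
  have hk1 : 1 ≤ k := Nat.lt_of_le_of_lt (Nat.zero_le _) (hck U)
  have hadjU : ∀ x : Fin 3 × V,
      (joinG (copiesG 3 G) (⊥ : SimpleGraph Unit)).Adj (Sum.inl x) U := fun x => trivial
  have hadjU' : ∀ x : Fin 3 × V,
      (joinG (copiesG 3 G) (⊥ : SimpleGraph Unit)).Adj U (Sum.inl x) := fun x => trivial
  have key : ∀ x y : Fin 3 × V, c (Sum.inl x) = c U → c (Sum.inl y) = c U →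
      ((f U < f (Sum.inl x) ∧ f U < f (Sum.inl y)) ∨
        (f (Sum.inl x) < f U ∧ f (Sum.inl y) < f U)) → x.1 = y.1 := by
    have main : ∀ x y : Fin 3 × V, f (Sum.inl x) < f (Sum.inl y) →
        c (Sum.inl x) = c U → c (Sum.inl y) = c U →
        ((f U < f (Sum.inl x) ∧ f U < f (Sum.inl y)) ∨
          (f (Sum.inl x) < f U ∧ f (Sum.inl y) < f U)) → x.1 = y.1 := by
      intro x y hxy hx hy hside
      rcases hside with ⟨hUx, hUy⟩ | ⟨hxU, hyU⟩
      · have := hc1 U (Sum.inl x) (Sum.inl y) hUx hxy hx.symm (hadjU y)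
        exact (this : y.1 = x.1 ∧ G.Adj y.2 x.2).1.symm
      · have := hc2 (Sum.inl x) (Sum.inl y) U hxy hyU (hy.trans rfl) (hadjU' x)
        exact (this : y.1 = x.1 ∧ G.Adj y.2 x.2).1.symm
    intro x y hx hy hside
    rcases lt_trichotomy (f (Sum.inl x)) (f (Sum.inl y)) with h | h | h
    · exact main x y h hx hy hside
    · have : (Sum.inl x : (Fin 3 × V) ⊕ Unit) = Sum.inl y := hf h
      simp only [Sum.inl.injEq] at this; rw [this]
    · exact (main y x h hy hx (hside.imp And.symm And.symm)).symm
  have hcopy : ∃ i : Fin 3, ∀ v : V, c (Sum.inl (i, v)) ≠ c U := by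
    by_contra hcon
    push_neg at hcon
    obtain ⟨v0, hv0⟩ := hcon 0
    obtain ⟨v1, hv1⟩ := hcon 1
    obtain ⟨v2, hv2⟩ := hcon 2
    have hne : ∀ p : Fin 3 × V, f (Sum.inl p) ≠ f U := by
      intro p h
      have := hf h
      simp [hUdef] at this
    rcases lt_or_gt_of_ne (hne (0, v0)) with h0 | h0 <;>
      rcases lt_or_gt_of_ne (hne (1, v1)) with h1 | h1 <;>
        rcases lt_or_gt_of_ne (hne (2, v2)) with h2 | h2
    · have := key (0, v0) (1, v1) hv0 hv1 (Or.inr ⟨h0, h1⟩); simp at this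
    · have := key (0, v0) (1, v1) hv0 hv1 (Or.inr ⟨h0, h1⟩); simp at this
    · have := key (0, v0) (2, v2) hv0 hv2 (Or.inr ⟨h0, h2⟩); simp at this
    · have := key (1, v1) (2, v2) hv1 hv2 (Or.inl ⟨h1, h2⟩); simp at this
    · have := key (1, v1) (2, v2) hv1 hv2 (Or.inr ⟨h1, h2⟩); simp at this
    · have := key (0, v0) (2, v2) hv0 hv2 (Or.inl ⟨h0, h2⟩); simp at this
    · have := key (0, v0) (1, v1) hv0 hv1 (Or.inl ⟨h0, h1⟩); simp at this
    · have := key (0, v0) (1, v1) hv0 hv1 (Or.inl ⟨h0, h1⟩); simp at this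
  obtain ⟨i0, hi0⟩ := hcopy
  have hmem : k - 1 ∈ {m | ∃ f c : V → ℕ, Function.Injective f ∧ (∀ v, c v < m) ∧
      StronglyConsistent G f c} := by
    refine ⟨fun v => f (Sum.inl (i0, v)),
      fun v => if c (Sum.inl (i0, v)) < c U then c (Sum.inl (i0, v))
        else c (Sum.inl (i0, v)) - 1, ?_, ?_, ?_, ?_⟩
    · intro a b h
      have := hf h
      simpa using this
    · intro v
      have ha := hi0 v
      have hb := hck (Sum.inl (i0, v))
      have hcu := hck U
      dsimp only
      split_ifs with h <;> omega
    · intro r s t h1 h2 hcol hadj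
      have har := hi0 r; have has := hi0 s
      have hcc : c (Sum.inl (i0, r)) = c (Sum.inl (i0, s)) := by
        dsimp only at hcol
        split_ifs at hcol <;> omega
      have := hc1 (Sum.inl (i0, r)) (Sum.inl (i0, s)) (Sum.inl (i0, t)) h1 h2 hcc
        (⟨rfl, hadj⟩ : (i0, t).1 = (i0, r).1 ∧ G.Adj t r)
      exact (this : (i0, t).1 = (i0, s).1 ∧ G.Adj t s).2
    · intro r s t h1 h2 hcol hadj
      have has := hi0 s; have hat := hi0 t
      have hcc : c (Sum.inl (i0, s)) = c (Sum.inl (i0, t)) := by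
        dsimp only at hcol
        split_ifs at hcol <;> omega
      have := hc2 (Sum.inl (i0, r)) (Sum.inl (i0, s)) (Sum.inl (i0, t)) h1 h2 hcc
        (⟨rfl, hadj⟩ : (i0, t).1 = (i0, r).1 ∧ G.Adj t r)
      exact (this : (i0, s).1 = (i0, r).1 ∧ G.Adj s r).2
  have hle : pthin G ≤ k - 1 := Nat.sInf_le hmem
  omega

end Aux

/-- For every graph `G`, `pthin (3G ∨ K₁) = pthin G + 1`. -/
theorem pthin_three_copies_join_K1 {V : Type*} [Fintype V] (G : SimpleGraph V) :
    pthin (joinG (copiesG 3 G) (⊥ : SimpleGraph Unit)) = pthin G + 1 := by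
  refine le_antisymm (upper_bound G) ?_
  have hmem := Nat.sInf_mem (⟨_, exists_trivial_layout (joinG (copiesG 3 G) (⊥ : SimpleGraph Unit))⟩ :
    {k | ∃ f c : (Fin 3 × V) ⊕ Unit → ℕ, Function.Injective f ∧ (∀ v, c v < k) ∧
      StronglyConsistent (joinG (copiesG 3 G) (⊥ : SimpleGraph Unit)) f c}.Nonempty)
  exact lower_aux G hmem
end

section
/- For every n ≥ 1, thin(K_n □ K_n) = n. -/
open SimpleGraph

/-- Upper bound: the lexicographic order with column coloring is consistent. -/
lemma rook_upper (n : ℕ) :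
    n ∈ {k | ∃ f c : Fin n × Fin n → ℕ, Function.Injective f ∧ (∀ v, c v < k) ∧
      Consistent ((⊤ : SimpleGraph (Fin n)) □ (⊤ : SimpleGraph (Fin n))) f c} := by
  rcases Nat.eq_zero_or_pos n with rfl | hn
  · exact ⟨fun v => 0, fun v => 0, fun v => v.1.elim0, fun v => v.1.elim0, fun r => r.1.elim0⟩
  refine ⟨fun v => n * v.1.val + v.2.val, fun v => v.2.val, ?_, fun v => v.2.isLt, ?_⟩
  · intro v w h
    have h' : n * v.1.val + v.2.val = n * w.1.val + w.2.val := h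
    have h1 : v.1.val = w.1.val := by
      have := congrArg (· / n) h'
      simpa [Nat.mul_add_div hn, Nat.div_eq_of_lt v.2.isLt, Nat.div_eq_of_lt w.2.isLt] using this
    have h2 : v.2.val = w.2.val := by rw [h1] at h'; omega
    exact Prod.ext (Fin.ext h1) (Fin.ext h2)
  · intro r s t hrs hst hcs hadj
    have hcs' : r.2.val = s.2.val := hcs
    have hrs' : n * r.1.val + r.2.val < n * s.1.val + s.2.val := hrs
    have hst' : n * s.1.val + s.2.val < n * t.1.val + t.2.val := hst
    have h1 : r.1.val < s.1.val := by
      refine Nat.lt_of_mul_lt_mul_left (a := n) (show n * r.1.val < n * s.1.val by omega)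
    rw [boxProd_adj] at hadj ⊢
    simp only [top_adj] at hadj ⊢
    rcases hadj with ⟨hne1, heq2⟩ | ⟨hne2, heq1⟩
    · -- t in same column as r (and s)
      have e2 : t.2.val = r.2.val := congrArg Fin.val heq2
      have h2 : s.1.val < t.1.val := by
        refine Nat.lt_of_mul_lt_mul_left (a := n) (show n * s.1.val < n * t.1.val by omega)
      exact Or.inl ⟨fun h => by rw [h] at h2; omega, Fin.ext (by omega)⟩
    · -- t in same row as r : contradiction with f s < f t
      exfalso
      have e1 : t.1.val = r.1.val := congrArg Fin.val heq1
      have hkey : n * (r.1.val + 1) ≤ n * s.1.val := Nat.mul_le_mul_left n h1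
      rw [Nat.mul_succ] at hkey
      have ht2 := t.2.isLt
      have e1' : n * t.1.val = n * r.1.val := by rw [e1]
      omega

/-- Lower bound, main case: if some row's maximum position is at most every
column's maximum position, then that row is rainbow, so there are ≥ n colors. -/
lemma rook_lower_row (n k : ℕ) (hn : 1 ≤ n)
    (f c : Fin n × Fin n → ℕ) (hf : Function.Injective f)
    (hc : ∀ v, c v < k)
    (hcons : Consistent ((⊤ : SimpleGraph (Fin n)) □ (⊤ : SimpleGraph (Fin n))) f c)
    (hu : (Finset.univ : Finset (Fin n)).Nonempty) (x₀ : Fin n)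
    (hminrow : ∀ y : Fin n,
      Finset.sup' Finset.univ hu (fun j => f (x₀, j)) ≤
      Finset.sup' Finset.univ hu (fun i => f (i, y))) :
    n ≤ k := by
  have main : ∀ y₁ y₂ : Fin n, y₁ ≠ y₂ → c (x₀, y₁) = c (x₀, y₂) →
      f (x₀, y₁) < f (x₀, y₂) → False := by
    intro y₁ y₂ hy12 hceq hflt
    have hperp : ∀ i : Fin n, f (i, y₁) < f (x₀, y₂) := by
      intro i
      rcases eq_or_ne i x₀ with rfl | hix
      · exact hflt
      · have hzw : (i, y₁) ≠ ((x₀, y₂) : Fin n × Fin n) := by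
          simp [Prod.ext_iff, hix]
        have hadj : ((⊤ : SimpleGraph (Fin n)) □ (⊤ : SimpleGraph (Fin n))).Adj (i, y₁) (x₀, y₁) := by
          rw [boxProd_adj]; exact Or.inl ⟨by simpa using hix, rfl⟩
        have hnadj : ¬ ((⊤ : SimpleGraph (Fin n)) □ (⊤ : SimpleGraph (Fin n))).Adj (i, y₁) (x₀, y₂) := by
          rw [boxProd_adj]
          rintro (⟨-, h⟩ | ⟨-, h⟩)
          · exact hy12 (by simpa using h)
          · exact hix (by simpa using h)
        rcases lt_trichotomy (f (i, y₁)) (f (x₀, y₂)) with h | h | h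
        · exact h
        · exact absurd (hf h) hzw
        · exact absurd (hcons (x₀, y₁) (x₀, y₂) (i, y₁) hflt h hceq hadj) hnadj
    have h1 : Finset.sup' Finset.univ hu (fun i => f (i, y₁)) < f (x₀, y₂) :=
      (Finset.sup'_lt_iff hu).2 (fun i _ => hperp i)
    have h2 : f (x₀, y₂) ≤ Finset.sup' Finset.univ hu (fun j => f (x₀, j)) :=
      Finset.le_sup' (fun j => f (x₀, j)) (Finset.mem_univ y₂)
    have h3 := hminrow y₁
    omega
  have hcinj : Function.Injective (fun j => c (x₀, j)) := by
    intro y₁ y₂ h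
    by_contra hne12
    have h' : c (x₀, y₁) = c (x₀, y₂) := h
    rcases lt_trichotomy (f (x₀, y₁)) (f (x₀, y₂)) with hlt | heq | hgt
    · exact main y₁ y₂ hne12 h' hlt
    · exact hne12 (by simpa [Prod.ext_iff] using hf heq)
    · exact main y₂ y₁ (Ne.symm hne12) h'.symm hgt
  have hinj : Function.Injective (fun j : Fin n => (⟨c (x₀, j), hc _⟩ : Fin k)) := by
    intro y₁ y₂ h
    exact hcinj (by simpa using congrArg Fin.val h)
  simpa using Fintype.card_le_of_injective _ hinj

/-- Lower bound: any consistent layout uses at least `n` colors. -/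
lemma rook_lower (n k : ℕ) (hn : 1 ≤ n)
    (f c : Fin n × Fin n → ℕ) (hf : Function.Injective f)
    (hc : ∀ v, c v < k)
    (hcons : Consistent ((⊤ : SimpleGraph (Fin n)) □ (⊤ : SimpleGraph (Fin n))) f c) :
    n ≤ k := by
  have hne : Nonempty (Fin n) := ⟨⟨0, hn⟩⟩
  have hu : (Finset.univ : Finset (Fin n)).Nonempty := Finset.univ_nonempty
  -- pick the row with minimal max and the column with minimal max
  obtain ⟨x₀, -, hx₀⟩ := Finset.exists_min_image Finset.univ
    (fun x => Finset.sup' Finset.univ hu (fun j => f (x, j))) hu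
  obtain ⟨y₀, -, hy₀⟩ := Finset.exists_min_image Finset.univ
    (fun y => Finset.sup' Finset.univ hu (fun i => f (i, y))) hu
  rcases le_or_gt (Finset.sup' Finset.univ hu (fun j => f (x₀, j)))
      (Finset.sup' Finset.univ hu (fun i => f (i, y₀))) with hcase | hcase
  · -- the minimal line is a row
    refine rook_lower_row n k hn f c hf hc hcons hu x₀ (fun y => le_trans hcase ?_)
    exact hy₀ y (Finset.mem_univ y)
  · -- the minimal line is a column: swap coordinates
    have hconsSwap : Consistent ((⊤ : SimpleGraph (Fin n)) □ (⊤ : SimpleGraph (Fin n)))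
        (fun v => f (v.2, v.1)) (fun v => c (v.2, v.1)) := by
      intro r s t h1 h2 h3 h4
      have h4' : ((⊤ : SimpleGraph (Fin n)) □ (⊤ : SimpleGraph (Fin n))).Adj
          (t.2, t.1) (r.2, r.1) := by
        rw [boxProd_adj] at h4 ⊢
        tauto
      have := hcons (r.2, r.1) (s.2, s.1) (t.2, t.1) h1 h2 h3 h4'
      rw [boxProd_adj] at this ⊢
      tauto
    have hfSwap : Function.Injective (fun v : Fin n × Fin n => f (v.2, v.1)) := by
      intro v w h
      have := hf h
      simp only [Prod.ext_iff] at this ⊢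
      tauto
    refine rook_lower_row n k hn _ _ hfSwap (fun v => hc _) hconsSwap hu y₀ (fun y => ?_)
    exact le_trans (le_of_lt hcase) (hx₀ y (Finset.mem_univ y))

/-- For every `n ≥ 1`, `thin (K_n □ K_n) = n`. -/
theorem thin_rook (n : ℕ) (hn : 1 ≤ n) :
    thin ((⊤ : SimpleGraph (Fin n)) □ (⊤ : SimpleGraph (Fin n))) = n := by
  refine le_antisymm (Nat.sInf_le (rook_upper n)) (le_csInf ⟨n, rook_upper n⟩ ?_)
  rintro k ⟨f, c, hf, hc, hcons⟩
  exact rook_lower n k hn f c hf hc hcons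
end
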